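/- arXiv:1910.07785 — 4 statements merged into one kernel-verified Lean document; each statement's English description precedes it below -/
import Mathlib

section
/- Let W be a Coxeter group with length function ℓ, and let W_K be a standard parabolic subgroup (generated by a subset K of the simple reflections). For w in W, let w^K denote the unique minimal-length element of the coset wW_K, and let {}_Kw^K denote the unique maximal-length element of the set {(vw)^K : v ∈ W_K}. Dually, let {}^Kw denote the unique minimal-length element of W_Kw, and {}^Kw_K the unique maximal-length element of {{}^K(wv) : v ∈ W_K}. Then ℓ({}_Kw^K) = ℓ({}^Kw_K). -/
/-!
Statement 0: Let `W` be a Coxeter group with length function `ℓ`, and `W_K` a (finite)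
standard parabolic subgroup generated by a subset `K` of the simple reflections.
For `w ∈ W`, let `w^K` be the unique minimal-length element of `w * W_K`, and let
`{}_K w^K` be the unique maximal-length element of `{(v*w)^K : v ∈ W_K}`.  Dually
define `{}^K w` and `{}^K w_K`.  Then `ℓ({}_K w^K) = ℓ({}^K w_K)`.
-/

namespace Statement0

open CoxeterSystem

variable {B : Type*} {W : Type*} [Group W] {M : CoxeterMatrix B}

/-- `m` is a minimal-length element of the right coset `w * W_K`. -/
def IsMinRight (cs : CoxeterSystem M W) (WK : Subgroup W) (w m : W) : Prop :=
  (∃ v ∈ WK, m = w * v) ∧ ∀ v ∈ WK, cs.length m ≤ cs.length (w * v)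

/-- `m` is a minimal-length element of the left coset `W_K * w`. -/
def IsMinLeft (cs : CoxeterSystem M W) (WK : Subgroup W) (w m : W) : Prop :=
  (∃ v ∈ WK, m = v * w) ∧ ∀ v ∈ WK, cs.length m ≤ cs.length (v * w)

/-- `a` is a maximal-length element of the set `{(v*w)^K : v ∈ W_K}` of right-minimal
representatives of the left `W_K`-translates of `w`; this is the element `{}_K w^K`. -/
def IsMaxOfMinRights (cs : CoxeterSystem M W) (WK : Subgroup W) (w a : W) : Prop :=
  (∃ v ∈ WK, IsMinRight cs WK (v * w) a) ∧
    ∀ v ∈ WK, ∀ m, IsMinRight cs WK (v * w) m → cs.length m ≤ cs.length a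

/-- `a` is a maximal-length element of the set `{{}^K(w*v) : v ∈ W_K}`; this is the
element `{}^K w_K`. -/
def IsMaxOfMinLefts (cs : CoxeterSystem M W) (WK : Subgroup W) (w a : W) : Prop :=
  (∃ v ∈ WK, IsMinLeft cs WK (w * v) a) ∧
    ∀ v ∈ WK, ∀ m, IsMinLeft cs WK (w * v) m → cs.length m ≤ cs.length a

section Aux


def tw (w : W) (f : W → ZMod 2) : W → ZMod 2 := fun x => f (w⁻¹ * x * w)

lemma tw_tw (u v : W) (f : W → ZMod 2) : tw u (tw v f) = tw (u * v) f := by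
  funext x; simp [tw, mul_assoc]

lemma tw_add (u : W) (f g : W → ZMod 2) : tw u (f + g) = tw u f + tw u g := rfl

lemma tw_one (f : W → ZMod 2) : tw 1 f = f := by funext x; simp [tw]

open Classical in
noncomputable def delta (t : W) : W → ZMod 2 := fun x => if x = t then 1 else 0

lemma conj_eq_iff (u x t : W) : u⁻¹ * x * u = t ↔ x = u * t * u⁻¹ :=
  ⟨fun h => by rw [← h]; group, fun h => by rw [h]; group⟩

open Classical in
lemma tw_delta (u t : W) : tw u (delta t) = delta (u * t * u⁻¹) := by
  funext x
  simp only [tw, delta]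
  exact if_congr (conj_eq_iff u x t) rfl rfl

omit [Group W] in
lemma delta_self (t : W) : delta t t = 1 := by simp [delta]

/-- the sign-function automorphism of `Multiplicative (W → ZMod 2)` -/
def actE (w : W) : Multiplicative (W → ZMod 2) ≃* Multiplicative (W → ZMod 2) where
  toFun f := .ofAdd (tw w f.toAdd)
  invFun f := .ofAdd (tw w⁻¹ f.toAdd)
  left_inv f := by simp [tw_tw, tw_one]
  right_inv f := by simp [tw_tw, tw_one]
  map_mul' f g := rfl

def act : W →* MulAut (Multiplicative (W → ZMod 2)) where
  toFun := actE
  map_one' := by ext f; simp [actE, tw_one]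
  map_mul' u v := by
    refine MulEquiv.ext fun f => ?_
    show Multiplicative.ofAdd (tw (u * v) f.toAdd) = Multiplicative.ofAdd (tw u (tw v f.toAdd))
    rw [tw_tw]



abbrev P (W : Type*) [Group W] := SemidirectProduct (Multiplicative (W → ZMod 2)) W act

noncomputable def phi0 (cs : CoxeterSystem M W) (i : B) : P W :=
  ⟨.ofAdd (delta (cs.simple i)), cs.simple i⟩

lemma sd_pow (g : W → ZMod 2) (c : W) (n : ℕ) :
    ((⟨.ofAdd g, c⟩ : P W)) ^ n
      = ⟨.ofAdd (∑ k ∈ Finset.range n, tw (c ^ k) g), c ^ n⟩ := by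
  induction n with
  | zero =>
      simp only [pow_zero, Finset.range_zero, Finset.sum_empty]
      rfl
  | succ n ih =>
      rw [pow_succ, ih, SemidirectProduct.mul_def]
      congr 1
      · show Multiplicative.ofAdd _ * (act (c ^ n)) (Multiplicative.ofAdd g) = _
        show Multiplicative.ofAdd _ * Multiplicative.ofAdd (tw (c ^ n) g) = _
        rw [← ofAdd_add, Finset.sum_range_succ]
      · rw [pow_succ]



omit [Group W] in
lemma add_self_zero (g : W → ZMod 2) : g + g = 0 := by
  funext x
  show g x + g x = 0
  have : ∀ y : ZMod 2, y + y = 0 := by decide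
  exact this _

lemma simple_conj_zpow (cs : CoxeterSystem M W) (i j : B) (k : ℤ) :
    cs.simple i * (cs.simple i * cs.simple j) ^ k
      = ((cs.simple i * cs.simple j) ^ (-k)) * cs.simple i := by
  have h : cs.simple i * (cs.simple i * cs.simple j) * (cs.simple i)⁻¹
      = (cs.simple i * cs.simple j)⁻¹ := by
    rw [cs.inv_simple, mul_inv_rev, cs.inv_simple, cs.inv_simple,
      cs.simple_mul_simple_cancel_left]
  have h2 := congrArg (· ^ k) h
  rw [conj_zpow, inv_zpow, ← zpow_neg] at h2
  calc cs.simple i * (cs.simple i * cs.simple j) ^ k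
      = (cs.simple i * (cs.simple i * cs.simple j) ^ k * (cs.simple i)⁻¹) * cs.simple i := by
        group
    _ = _ := by rw [h2]

lemma conj_c_si (cs : CoxeterSystem M W) (i j : B) (k : ℤ) :
    (cs.simple i * cs.simple j) ^ k * cs.simple i * (cs.simple i * cs.simple j) ^ (-k)
      = (cs.simple i * cs.simple j) ^ (2 * k) * cs.simple i := by
  have h := simple_conj_zpow cs i j (-k)
  rw [neg_neg] at h
  rw [mul_assoc, h, ← mul_assoc, ← zpow_add]
  congr 2
  ring

lemma liftable (cs : CoxeterSystem M W) : M.IsLiftable (phi0 cs) := by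
  intro i j
  set si := cs.simple i
  set c := si * cs.simple j with hc
  have hmul : phi0 cs i * phi0 cs j
      = (⟨.ofAdd (delta si + delta (c * si)), c⟩ : P W) := by
    rw [phi0, phi0, SemidirectProduct.mul_def]
    congr 1
    · show Multiplicative.ofAdd _ * Multiplicative.ofAdd (tw si (delta (cs.simple j))) = _
      rw [← ofAdd_add, tw_delta, cs.inv_simple, hc, mul_assoc]
  rw [hmul, sd_pow, cs.simple_mul_simple_pow i j]
  have key : ∑ k ∈ Finset.range (M i j), tw (c ^ k) (delta si + delta (c * si)) = 0 := by
    have hterm : ∀ k : ℕ, tw (c ^ k) (delta si + delta (c * si))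
        = delta (c ^ (2 * k) * si) + delta (c ^ (2 * k + 1) * si) := by
      intro k
      rw [tw_add, tw_delta, tw_delta]
      have e1 : c ^ k * si * (c ^ k)⁻¹ = c ^ (2 * k) * si := by
        have h := conj_c_si cs i j (k : ℤ)
        rw [show ((2:ℤ) * (k:ℤ)) = ((2*k : ℕ) : ℤ) by push_cast; ring] at h
        rw [zpow_neg, zpow_natCast, zpow_natCast] at h
        exact h
      have e2 : c ^ k * (c * si) * (c ^ k)⁻¹ = c ^ (2 * k + 1) * si := by
        calc c ^ k * (c * si) * (c ^ k)⁻¹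
            = (c ^ k * c) * si * (c ^ k)⁻¹ := by rw [← mul_assoc]
          _ = (c * c ^ k) * si * (c ^ k)⁻¹ := by rw [← pow_succ, ← pow_succ']
          _ = c * (c ^ k * si * (c ^ k)⁻¹) := by simp [mul_assoc]
          _ = c * (c ^ (2 * k) * si) := by rw [e1]
          _ = c ^ (2 * k + 1) * si := by rw [← mul_assoc, ← pow_succ']
      rw [e1, e2]
    calc ∑ k ∈ Finset.range (M i j), tw (c ^ k) (delta si + delta (c * si))
        = ∑ k ∈ Finset.range (M i j),
            (delta (c ^ (2 * k) * si) + delta (c ^ (2 * k + 1) * si)) := by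
          exact Finset.sum_congr rfl fun k _ => hterm k
      _ = ∑ r ∈ Finset.range (2 * M i j), delta ((c : W) ^ r * si) := by
          induction (M i j) with
          | zero => simp
          | succ n ih =>
              rw [Finset.sum_range_succ, ih, Nat.mul_succ, Finset.sum_range_succ,
                Finset.sum_range_succ]
              ring_nf
      _ = 0 := by
          have h2 : 2 * M i j = M i j + M i j := by ring
          rw [h2, Finset.sum_range_add]
          have : ∀ x ∈ Finset.range (M i j),
              delta ((c:W) ^ (M i j + x) * si) = delta ((c:W) ^ x * si) := by
            intro x _
            rw [pow_add, cs.simple_mul_simple_pow i j, one_mul]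
          rw [Finset.sum_congr rfl this]
          exact add_self_zero _
  rw [key]
  rfl



noncomputable def nf (cs : CoxeterSystem M W) (w : W) : W → ZMod 2 :=
  (cs.lift ⟨phi0 cs, liftable cs⟩ w).left.toAdd

lemma nf_mul (cs : CoxeterSystem M W) (u v : W) :
    nf cs (u * v) = nf cs u + tw u (nf cs v) := by
  unfold nf
  rw [map_mul, SemidirectProduct.mul_left]
  have hr : (cs.lift ⟨phi0 cs, liftable cs⟩ u).right = u := by
    have : ∀ w : W, (cs.lift ⟨phi0 cs, liftable cs⟩ w).right = w := by
      intro w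
      induction w using cs.simple_induction_left with
      | one => simp
      | mul_simple_left i w ih =>
          rw [map_mul, SemidirectProduct.mul_right, ih, cs.lift_apply_simple]
          rfl
    exact this u
  rw [hr]
  rfl

lemma nf_simple (cs : CoxeterSystem M W) (i : B) :
    nf cs (cs.simple i) = delta (cs.simple i) := by
  unfold nf
  rw [cs.lift_apply_simple]
  rfl

lemma nf_one (cs : CoxeterSystem M W) : nf cs 1 = 0 := by
  unfold nf; rw [map_one]; rfl

lemma nf_inv (cs : CoxeterSystem M W) (w : W) : nf cs w⁻¹ = tw w⁻¹ (nf cs w) := by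
  have h := nf_mul cs w⁻¹ w
  rw [inv_mul_cancel, nf_one] at h
  have key : ∀ y z : ZMod 2, 0 = y + z → y = z := by decide
  funext x
  exact key _ _ (congrFun h x)



lemma nf_wordProd_support (cs : CoxeterSystem M W) (ω : List B) (t : W)
    (h : nf cs (cs.wordProd ω) t ≠ 0) : t ∈ cs.leftInvSeq ω := by
  induction ω generalizing t with
  | nil => rw [cs.wordProd_nil, nf_one] at h; exact absurd rfl h
  | cons i ω ih =>
      rw [cs.wordProd_cons, nf_mul, nf_simple] at h
      by_cases ht : t = cs.simple i
      · show t ∈ cs.leftInvSeq (i :: ω)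
        rw [leftInvSeq, ht]
        exact List.mem_cons_self
      · have hδ : delta (cs.simple i) t = 0 := by simp [delta, ht]
        have h2 : nf cs (cs.wordProd ω) (cs.simple i * t * cs.simple i) ≠ 0 := by
          intro hz
          apply h
          show delta (cs.simple i) t + tw (cs.simple i) (nf cs (cs.wordProd ω)) t = 0
          rw [hδ]
          show (0 : ZMod 2) + nf cs (cs.wordProd ω) ((cs.simple i)⁻¹ * t * cs.simple i) = 0
          rw [cs.inv_simple, hz, add_zero]
        have h3 := ih _ h2
        show t ∈ cs.leftInvSeq (i :: ω)
        rw [leftInvSeq]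
        refine List.mem_cons_of_mem _ ?_
        refine List.mem_map.mpr ⟨cs.simple i * t * cs.simple i, h3, ?_⟩
        show cs.simple i * (cs.simple i * t * cs.simple i) * (cs.simple i)⁻¹ = t
        rw [cs.inv_simple, ← mul_assoc, ← mul_assoc, cs.simple_mul_simple_self, one_mul,
          mul_assoc, cs.simple_mul_simple_self, mul_one]

lemma nf_refl (cs : CoxeterSystem M W) {t : W} (ht : cs.IsReflection t) :
    nf cs t t = 1 := by
  obtain ⟨u, i, rfl⟩ := ht
  set t := u * cs.simple i * u⁻¹ with htdef
  have h1 : nf cs t = nf cs u + tw u (delta (cs.simple i)) + tw t (nf cs u) := by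
    rw [htdef, mul_assoc, nf_mul cs u _, nf_mul cs (cs.simple i) _, nf_simple, tw_add,
      ← add_assoc, nf_inv, tw_tw, tw_tw]
    congr 2
    group
  have h2 : tw u (delta (cs.simple i)) t = 1 := by
    rw [tw_delta, htdef]
    exact delta_self _
  have h3 : tw t (nf cs u) t = nf cs u t := by
    show nf cs u (t⁻¹ * t * t) = nf cs u t
    rw [inv_mul_cancel, one_mul]
  have h4 : ∀ y : ZMod 2, y + 1 + y = 1 := by decide
  calc nf cs t t = nf cs u t + tw u (delta (cs.simple i)) t + tw t (nf cs u) t := by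
        rw [h1]; rfl
    _ = nf cs u t + 1 + nf cs u t := by rw [h2, h3]
    _ = 1 := h4 _

lemma nf_eq_one_of_inversion (cs : CoxeterSystem M W) {t w : W} (ht : cs.IsReflection t)
    (hlt : cs.length (t * w) < cs.length w) : nf cs w t = 1 := by
  by_contra hne
  have h0 : nf cs w t = 0 := by
    have : ∀ y : ZMod 2, y ≠ 1 → y = 0 := by decide
    exact this _ hne
  have h1 : nf cs (t * w) t = 1 := by
    rw [nf_mul]
    show nf cs t t + nf cs w (t⁻¹ * t * t) = 1
    rw [inv_mul_cancel, one_mul, h0, add_zero, nf_refl cs ht]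
  obtain ⟨ω, hred, hw⟩ := cs.exists_reduced_word' (t * w)
  rw [hw] at h1
  have h2 : t ∈ cs.leftInvSeq ω := nf_wordProd_support cs ω t (by rw [h1]; exact one_ne_zero)
  have h3 := cs.isLeftInversion_of_mem_leftInvSeq hred h2
  rw [← hw] at h3
  have h5 := h3.2
  rw [← mul_assoc, ht.mul_self, one_mul] at h5
  omega

/-- Strong exchange property (left version). -/
lemma strong_exchange (cs : CoxeterSystem M W) {t : W} (ht : cs.IsReflection t)
    (ω : List B) (_hred : cs.IsReduced ω)
    (hlt : cs.length (t * cs.wordProd ω) < cs.length (cs.wordProd ω)) :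
    ∃ j < ω.length, t * cs.wordProd ω = cs.wordProd (ω.eraseIdx j) := by
  have h1 : nf cs (cs.wordProd ω) t = 1 := nf_eq_one_of_inversion cs ht hlt
  have h2 : t ∈ cs.leftInvSeq ω := nf_wordProd_support cs ω t (by rw [h1]; exact one_ne_zero)
  obtain ⟨j, hj, hjt⟩ := List.mem_iff_getElem.mp h2
  rw [cs.length_leftInvSeq] at hj
  refine ⟨j, hj, ?_⟩
  have := cs.getD_leftInvSeq_mul_wordProd ω j
  rw [List.getD_eq_getElem _ _ (by rw [cs.length_leftInvSeq]; exact hj), hjt] at this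
  exact this

/-- Strong exchange property (right version). -/
lemma strong_exchange_right (cs : CoxeterSystem M W) {t : W} (ht : cs.IsReflection t)
    (ω : List B) (hred : cs.IsReduced ω)
    (hlt : cs.length (cs.wordProd ω * t) < cs.length (cs.wordProd ω)) :
    ∃ j < ω.length, cs.wordProd ω * t = cs.wordProd (ω.eraseIdx j) := by
  set w := cs.wordProd ω
  have ht' : cs.IsReflection (w * t * w⁻¹) := ht.conj w
  have heq : (w * t * w⁻¹) * w = w * t := by group
  have hlt' : cs.length ((w * t * w⁻¹) * w) < cs.length w := by rw [heq]; exact hlt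
  obtain ⟨j, hj, hje⟩ := strong_exchange cs ht' ω hred hlt'
  exact ⟨j, hj, by rw [← heq]; exact hje⟩



lemma wordProd_mem_closure (cs : CoxeterSystem M W) (K : Set B) (ω : List B)
    (hK : ∀ b ∈ ω, b ∈ K) :
    cs.wordProd ω ∈ Subgroup.closure (cs.simple '' K) := by
  induction ω with
  | nil => rw [cs.wordProd_nil]; exact one_mem _
  | cons i ω ih =>
      rw [cs.wordProd_cons]
      exact mul_mem (Subgroup.subset_closure ⟨i, hK i List.mem_cons_self, rfl⟩)
        (ih fun b hb => hK b (List.mem_cons_of_mem _ hb))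

lemma red_Kword_mul_simple (cs : CoxeterSystem M W) (K : Set B) {ω : List B}
    (hred : cs.IsReduced ω) (hK : ∀ b ∈ ω, b ∈ K) (i : B) (hi : i ∈ K) :
    ∃ ω' : List B, cs.IsReduced ω' ∧ (∀ b ∈ ω', b ∈ K) ∧
      cs.wordProd ω * cs.simple i = cs.wordProd ω' := by
  set v := cs.wordProd ω with hv
  rcases cs.length_mul_simple v i with hup | hdown
  · refine ⟨ω ++ [i], ?_, ?_, ?_⟩
    · show cs.length (cs.wordProd (ω ++ [i])) = (ω ++ [i]).length
      rw [cs.wordProd_append, cs.wordProd_singleton, List.length_append, List.length_singleton,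
        hup, hred]
    · intro b hb
      rcases List.mem_append.mp hb with h | h
      · exact hK b h
      · rw [List.mem_singleton.mp h]; exact hi
    · rw [cs.wordProd_append, cs.wordProd_singleton]
  · -- descent: use strong exchange
    have hlt : cs.length (v * cs.simple i) < cs.length v := by omega
    obtain ⟨j, hj, hje⟩ := strong_exchange_right cs (cs.isReflection_simple i) ω hred
      (by rw [← hv]; exact hlt)
    refine ⟨ω.eraseIdx j, ?_, ?_, hje⟩
    · show cs.length (cs.wordProd (ω.eraseIdx j)) = (ω.eraseIdx j).length
      rw [← hje, List.length_eraseIdx_of_lt hj, ← hv]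
      have : cs.length v = ω.length := hred
      omega
    · intro b hb
      exact hK b (List.mem_of_mem_eraseIdx hb)

lemma mul_red_Kword (cs : CoxeterSystem M W) (K : Set B) (ωy : List B)
    (hyK : ∀ b ∈ ωy, b ∈ K) :
    ∀ ωx : List B, cs.IsReduced ωx → (∀ b ∈ ωx, b ∈ K) →
      ∃ ω' : List B, cs.IsReduced ω' ∧ (∀ b ∈ ω', b ∈ K) ∧
        cs.wordProd ωx * cs.wordProd ωy = cs.wordProd ω' := by
  induction ωy with
  | nil =>
      intro ωx hxred hxK
      exact ⟨ωx, hxred, hxK, by rw [cs.wordProd_nil, mul_one]⟩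
  | cons i ωy ih =>
      intro ωx hxred hxK
      obtain ⟨ω1, h1red, h1K, h1eq⟩ := red_Kword_mul_simple cs K hxred hxK i
        (hyK i List.mem_cons_self)
      obtain ⟨ω2, h2red, h2K, h2eq⟩ :=
        ih (fun b hb => hyK b (List.mem_cons_of_mem _ hb)) ω1 h1red h1K
      refine ⟨ω2, h2red, h2K, ?_⟩
      rw [cs.wordProd_cons, ← mul_assoc, h1eq, h2eq]

lemma exists_red_Kword (cs : CoxeterSystem M W) (K : Set B) {v : W}
    (hv : v ∈ Subgroup.closure (cs.simple '' K)) :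
    ∃ ω : List B, cs.IsReduced ω ∧ (∀ b ∈ ω, b ∈ K) ∧ v = cs.wordProd ω := by
  induction hv using Subgroup.closure_induction with
  | mem x hx =>
      obtain ⟨i, hi, rfl⟩ := hx
      refine ⟨[i], ?_, ?_, ?_⟩
      · show cs.length (cs.wordProd [i]) = _
        rw [cs.wordProd_singleton, cs.length_simple, List.length_singleton]
      · intro b hb; rw [List.mem_singleton.mp hb]; exact hi
      · rw [cs.wordProd_singleton]
  | one => exact ⟨[], by simp [CoxeterSystem.IsReduced], by simp, by rw [cs.wordProd_nil]⟩
  | mul x y hx hy ihx ihy =>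
      obtain ⟨ωx, hxred, hxK, rfl⟩ := ihx
      obtain ⟨ωy, hyred, hyK, rfl⟩ := ihy
      exact mul_red_Kword cs K ωy hyK ωx hxred hxK
  | inv x hx ihx =>
      obtain ⟨ω, hred, hK, rfl⟩ := ihx
      refine ⟨ω.reverse, ?_, ?_, ?_⟩
      · exact (cs.isReduced_reverse_iff ω).mpr hred
      · intro b hb; exact hK b (List.mem_reverse.mp hb)
      · rw [cs.wordProd_reverse]



/-- If `a` is minimal in its coset `a * W_K`, lengths add: `ℓ(av) = ℓ(a) + ℓ(v)`. -/
lemma length_mul_eq_of_min (cs : CoxeterSystem M W) (K : Set B) (a : W)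
    (hmin : ∀ u ∈ Subgroup.closure (cs.simple '' K), cs.length a ≤ cs.length (a * u))
    {v : W} (hv : v ∈ Subgroup.closure (cs.simple '' K)) :
    cs.length (a * v) = cs.length a + cs.length v := by
  obtain ⟨ω, hred, hK, rfl⟩ := exists_red_Kword cs K hv
  rw [hred]
  clear hv
  induction ω using List.reverseRecOn with
  | nil => simp
  | append_singleton ω' i ih =>
      have hred' : cs.IsReduced ω' := by
        have := hred.take ω'.length
        rwa [List.take_left] at this
      have hK' : ∀ b ∈ ω', b ∈ K := fun b hb => hK b (List.mem_append_left _ hb)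
      have ihx := ih hred' hK'
      set x := a * cs.wordProd ω' with hxdef
      have hgoal : a * cs.wordProd (ω' ++ [i]) = x * cs.simple i := by
        rw [cs.wordProd_append, cs.wordProd_singleton, hxdef, mul_assoc]
      rw [hgoal, List.length_append, List.length_singleton]
      rcases cs.length_mul_simple x i with hup | hdown
      · omega
      · exfalso
        obtain ⟨ρ, hρred, hρeq⟩ := cs.exists_reduced_word' a
        have hζred : cs.IsReduced (ρ ++ ω') := by
          show cs.length (cs.wordProd (ρ ++ ω')) = _
          rw [cs.wordProd_append, ← hρeq, ← hxdef, List.length_append, ihx]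
          have : cs.length a = ρ.length := by rw [hρeq]; exact hρred
          omega
        have hζx : cs.wordProd (ρ ++ ω') = x := by
          rw [cs.wordProd_append, ← hρeq]
        have hlt : cs.length (cs.wordProd (ρ ++ ω') * cs.simple i)
            < cs.length (cs.wordProd (ρ ++ ω')) := by
          rw [hζx]; omega
        obtain ⟨j, hj, hje⟩ := strong_exchange_right cs (cs.isReflection_simple i)
          (ρ ++ ω') hζred hlt
        rw [hζx] at hje
        rw [List.length_append] at hj
        have hρlen : cs.length a = ρ.length := by rw [hρeq]; exact hρred
        by_cases hcase : j < ρ.length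
        · -- contradiction with minimality of a
          rw [List.eraseIdx_append_of_lt_length hcase] at hje
          rw [cs.wordProd_append] at hje
          set u : W := cs.wordProd ω' * cs.simple i * (cs.wordProd ω')⁻¹ with hu
          have humem : u ∈ Subgroup.closure (cs.simple '' K) := by
            refine mul_mem (mul_mem (wordProd_mem_closure cs K ω' hK') ?_) ?_
            · exact Subgroup.subset_closure ⟨i, hK i (by simp), rfl⟩
            · exact inv_mem (wordProd_mem_closure cs K ω' hK')
          have hau : a * u = cs.wordProd (ρ.eraseIdx j) := by
            rw [hu, hxdef] at *
            calc a * (cs.wordProd ω' * cs.simple i * (cs.wordProd ω')⁻¹)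
                = (a * cs.wordProd ω' * cs.simple i) * (cs.wordProd ω')⁻¹ := by group
              _ = (cs.wordProd (ρ.eraseIdx j) * cs.wordProd ω') * (cs.wordProd ω')⁻¹ := by
                  rw [hje]
              _ = cs.wordProd (ρ.eraseIdx j) := by group
          have hb1 := hmin u humem
          rw [hau] at hb1
          have hb2 := cs.length_wordProd_le (ρ.eraseIdx j)
          rw [List.length_eraseIdx_of_lt hcase] at hb2
          omega
        · -- contradiction with reducedness of ω' ++ [i]
          push_neg at hcase
          rw [List.eraseIdx_append_of_length_le hcase] at hje
          rw [cs.wordProd_append, ← hρeq] at hje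
          rw [hxdef, mul_assoc] at hje
          have hje2 : cs.wordProd ω' * cs.simple i
              = cs.wordProd (ω'.eraseIdx (j - ρ.length)) := mul_left_cancel hje
          have h1 : cs.length (cs.wordProd ω' * cs.simple i) ≤ ω'.length - 1 := by
            rw [hje2]
            have := cs.length_wordProd_le (ω'.eraseIdx (j - ρ.length))
            have hlt2 : j - ρ.length < ω'.length := by omega
            rw [List.length_eraseIdx_of_lt hlt2] at this
            exact this
          have h2 : cs.length (cs.wordProd ω' * cs.simple i) = ω'.length + 1 := by
            have := hred
            rw [CoxeterSystem.IsReduced, cs.wordProd_append, cs.wordProd_singleton,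
              List.length_append, List.length_singleton] at this
            exact this
          omega


end Aux

/-- For `w ∈ W`, `ℓ({}_K w^K) = ℓ({}^K w_K)`. -/
theorem length_maxMinRight_eq_length_maxMinLeft
    (cs : CoxeterSystem M W) (K : Set B)
    (WK : Subgroup W) (hWK : WK = Subgroup.closure (cs.simple '' K))
    (hfin : (WK : Set W).Finite)
    (w a b : W)
    (ha : IsMaxOfMinRights cs WK w a) (hb : IsMaxOfMinLefts cs WK w b) :
    cs.length a = cs.length b := by
  classical
  -- a longest element of W_K
  obtain ⟨u₀, hu₀F, hu₀max'⟩ :=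
    Finset.exists_max_image hfin.toFinset cs.length ⟨1, hfin.mem_toFinset.mpr (one_mem WK)⟩
  have hu₀ : u₀ ∈ WK := hfin.mem_toFinset.mp hu₀F
  have hu₀max : ∀ u ∈ WK, cs.length u ≤ cs.length u₀ :=
    fun u hu => hu₀max' u (hfin.mem_toFinset.mpr hu)
  -- existence of minimal coset representatives
  have minR : ∀ z : W, ∃ m, IsMinRight cs WK z m := by
    intro z
    obtain ⟨m, hmF, hmmin⟩ := Finset.exists_min_image (hfin.toFinset.image (fun u => z * u))
      cs.length ⟨z * 1, Finset.mem_image.mpr ⟨1, hfin.mem_toFinset.mpr (one_mem WK), rfl⟩⟩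
    obtain ⟨u, huF, rfl⟩ := Finset.mem_image.mp hmF
    exact ⟨z * u, ⟨u, hfin.mem_toFinset.mp huF, rfl⟩,
      fun v hv => hmmin _ (Finset.mem_image.mpr ⟨v, hfin.mem_toFinset.mpr hv, rfl⟩)⟩
  have minL : ∀ z : W, ∃ m, IsMinLeft cs WK z m := by
    intro z
    obtain ⟨m, hmF, hmmin⟩ := Finset.exists_min_image (hfin.toFinset.image (fun u => u * z))
      cs.length ⟨1 * z, Finset.mem_image.mpr ⟨1, hfin.mem_toFinset.mpr (one_mem WK), rfl⟩⟩
    obtain ⟨u, huF, rfl⟩ := Finset.mem_image.mp hmF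
    exact ⟨u * z, ⟨u, hfin.mem_toFinset.mp huF, rfl⟩,
      fun v hv => hmmin _ (Finset.mem_image.mpr ⟨v, hfin.mem_toFinset.mpr hv, rfl⟩)⟩
  -- destructure ha, hb
  obtain ⟨⟨va, hva, ⟨⟨ua, hua, haeq⟩, haminco⟩⟩, hamax⟩ := ha
  obtain ⟨⟨vb, hvb, ⟨⟨ub, hub, hbeq⟩, hbminco⟩⟩, hbmax⟩ := hb
  -- minimality of a in its own right coset, of b in its own left coset
  have amin : ∀ u ∈ WK, cs.length a ≤ cs.length (a * u) := by
    intro u hu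
    have h : a * u = (va * w) * (ua * u) := by rw [haeq]; group
    rw [h]
    exact haminco _ (mul_mem hua hu)
  have bmin : ∀ u ∈ WK, cs.length b ≤ cs.length (u * b) := by
    intro u hu
    have h : u * b = (u * ub) * (w * vb) := by rw [hbeq]; group
    rw [h]
    exact hbminco _ (mul_mem hu hub)
  have binvmin : ∀ u ∈ WK, cs.length b⁻¹ ≤ cs.length (b⁻¹ * u) := by
    intro u hu
    have h : cs.length (b⁻¹ * u) = cs.length (u⁻¹ * b) := by
      rw [← cs.length_inv (u⁻¹ * b)]; congr 1; group
    rw [h, cs.length_inv]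
    exact bmin u⁻¹ (inv_mem hu)
  -- length additivity
  have hA : cs.length (a * u₀) = cs.length a + cs.length u₀ :=
    length_mul_eq_of_min cs K a (fun u hu => amin u (hWK ▸ hu)) (hWK ▸ hu₀)
  have hB : cs.length (b⁻¹ * u₀) = cs.length b + cs.length u₀ := by
    have := length_mul_eq_of_min cs K b⁻¹ (fun u hu => binvmin u (hWK ▸ hu)) (hWK ▸ hu₀)
    rwa [cs.length_inv] at this
  -- double coset bounds
  have boundB : ∀ v ∈ WK, ∀ u ∈ WK, cs.length (v * w * u) ≤ cs.length b + cs.length u₀ := by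
    intro v hv u hu
    obtain ⟨m, ⟨vm, hvm, hmeq⟩, hmmin⟩ := minL (w * u)
    have hmb := hbmax u hu m ⟨⟨vm, hvm, hmeq⟩, hmmin⟩
    have h : v * w * u = (v * vm⁻¹) * m := by rw [hmeq]; group
    rw [h]
    calc cs.length ((v * vm⁻¹) * m) ≤ cs.length (v * vm⁻¹) + cs.length m :=
          cs.length_mul_le _ _
      _ ≤ cs.length u₀ + cs.length b :=
          Nat.add_le_add (hu₀max _ (mul_mem hv (inv_mem hvm))) hmb
      _ = cs.length b + cs.length u₀ := Nat.add_comm _ _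
  have boundA : ∀ v ∈ WK, ∀ u ∈ WK, cs.length (v * w * u) ≤ cs.length a + cs.length u₀ := by
    intro v hv u hu
    obtain ⟨m, ⟨um, hum, hmeq⟩, hmmin⟩ := minR (v * w)
    have hma := hamax v hv m ⟨⟨um, hum, hmeq⟩, hmmin⟩
    have h : v * w * u = m * (um⁻¹ * u) := by rw [hmeq]; group
    rw [h]
    calc cs.length (m * (um⁻¹ * u)) ≤ cs.length m + cs.length (um⁻¹ * u) :=
          cs.length_mul_le _ _
      _ ≤ cs.length a + cs.length u₀ :=
          Nat.add_le_add hma (hu₀max _ (mul_mem (inv_mem hum) hu))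
  -- conclude
  have h1 : cs.length a + cs.length u₀ ≤ cs.length b + cs.length u₀ := by
    have he : a * u₀ = va * w * (ua * u₀) := by rw [haeq]; group
    rw [← hA, he]
    exact boundB va hva (ua * u₀) (mul_mem hua hu₀)
  have h2 : cs.length b + cs.length u₀ ≤ cs.length a + cs.length u₀ := by
    have he : cs.length (b⁻¹ * u₀) = cs.length ((u₀⁻¹ * ub) * w * vb) := by
      rw [← cs.length_inv (b⁻¹ * u₀)]
      congr 1
      rw [hbeq]; group
    rw [← hB, he]
    exact boundA (u₀⁻¹ * ub) (mul_mem (inv_mem hu₀) hub) vb hvb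
  omega

end Statement0
end

section
/- Let W̃ be an extended affine Weyl group with length function ℓ and a length-preserving automorphism σ of finite order. An element w ∈ W̃ is called σ-straight if ℓ(w σ(w) σ²(w) ⋯ σ^{m-1}(w)) = m·ℓ(w) for all m ≥ 1. Prove that if w is σ-straight, then for the Newton point ν(w) (the dominant W₀-conjugate of the average translation part), one has ℓ(w) = ⟨ν(w), 2ρ⟩, where ρ is the half sum of the positive roots. -/
/-!
Statement 4: Let `W̃ = X_*(T)_{Γ₀} ⋊ W₀` be an extended affine Weyl group of a root
datum, with length function `ℓ` and a length-preserving automorphism `σ` of finite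
order.  An element `w ∈ W̃` is `σ`-straight if
`ℓ(w σ(w) σ²(w) ⋯ σ^{m-1}(w)) = m·ℓ(w)` for all `m ≥ 1`.  If `w` is `σ`-straight then
`ℓ(w) = ⟨ν(w), 2ρ⟩`, where `ν(w)` is the Newton point of `w` (the dominant
`W₀`-conjugate of the average translation part `(1/n)(w σ(w) ⋯ σ^{n-1}(w))`) and `ρ`
is the half sum of the positive roots.

We encode the root-datum data as: a translation lattice `X` with an action of the
finite Weyl group `W₀`, a finite set `Pos` of positive roots viewed as linear characters
`X →+ ℤ` on the cocharacter lattice (permuted by `W₀` up to sign, with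
`Pos ∩ (−Pos) = ∅`), and the length function `ℓ` on `W̃` pinned down by the standard
Iwahori–Bernstein length formula
`ℓ(t^λ u) = Σ_{α>0, u⁻¹α>0} |⟨λ,α⟩| + Σ_{α>0, u⁻¹α<0} |⟨λ,α⟩ − 1|`.
The conclusion `ℓ(w) = ⟨ν(w), 2ρ⟩` is stated with denominators cleared:
`n · ℓ(w) = Σ_{α ∈ Pos} ⟨u·λ, α⟩` where `ν(w) = (1/n)·(u·λ)` is dominant.
-/

namespace Statement4

open SemidirectProduct
open scoped Classical

/-- The twisted product `w · σ(w) · σ²(w) ⋯ σ^{m-1}(w)`. -/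
def twistedProd {G : Type*} [Group G] (σ : MulAut G) (w : G) : ℕ → G
  | 0 => 1
  | n + 1 => twistedProd σ w n * (σ ^ n) w

variable {X : Type*} [AddCommGroup X] {W₀ : Type*} [Group W₀]

/-- The action of `W₀` on characters: `(u • α)(λ) = α(u⁻¹ • λ)`. -/
def act (ψ : W₀ →* Multiplicative (AddAut X)) (u : W₀) (α : X →+ ℤ) : X →+ ℤ :=
  α.comp (AddEquiv.toAddMonoidHom (Multiplicative.toAdd (ψ u⁻¹) : X ≃+ X))

lemma act_apply (ψ : W₀ →* Multiplicative (AddAut X)) (v : W₀) (α : X →+ ℤ) (x : X) :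
    act ψ v α x = α (Multiplicative.toAdd (ψ v⁻¹) x) := rfl

lemma act_neg (ψ : W₀ →* Multiplicative (AddAut X)) (v : W₀) (α : X →+ ℤ) :
    act ψ v (-α) = -(act ψ v α) := by
  ext x; simp [act_apply]

lemma act_one (ψ : W₀ →* Multiplicative (AddAut X)) (α : X →+ ℤ) : act ψ 1 α = α := by
  ext x; simp [act_apply]

lemma act_mul (ψ : W₀ →* Multiplicative (AddAut X)) (v v' : W₀) (α : X →+ ℤ) :
    act ψ v (act ψ v' α) = act ψ (v * v') α := by
  ext x
  simp only [act_apply, mul_inv_rev, map_mul]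
  rfl

lemma act_inv_act (ψ : W₀ →* Multiplicative (AddAut X)) (v : W₀) (α : X →+ ℤ) :
    act ψ v⁻¹ (act ψ v α) = α := by
  rw [act_mul, inv_mul_cancel, act_one]

lemma act_act_inv (ψ : W₀ →* Multiplicative (AddAut X)) (v : W₀) (α : X →+ ℤ) :
    act ψ v (act ψ v⁻¹ α) = α := by
  rw [act_mul, mul_inv_cancel, act_one]

lemma sum_abs_act (ψ : W₀ →* Multiplicative (AddAut X)) (Pos : Finset (X →+ ℤ))
    (hperm : ∀ (u : W₀), ∀ α ∈ Pos, act ψ u α ∈ Pos ∨ ∃ β ∈ Pos, act ψ u α = -β)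
    (hdisj : ∀ α ∈ Pos, -α ∉ Pos) (v : W₀) (lam : X) :
    ∑ α ∈ Pos, |(act ψ v α) lam| = ∑ α ∈ Pos, |α lam| := by
  have hmem : ∀ (v : W₀), ∀ α ∈ Pos,
      (if act ψ v α ∈ Pos then act ψ v α else -(act ψ v α)) ∈ Pos := by
    intro v α hα
    by_cases h : act ψ v α ∈ Pos
    · simpa [h]
    · rcases hperm v α hα with h' | ⟨β, hβ, hβ'⟩
      · exact absurd h' h
      · rw [if_neg h, hβ', neg_neg]; exact hβ
  refine Finset.sum_nbij'
    (i := fun α => if act ψ v α ∈ Pos then act ψ v α else -(act ψ v α))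
    (j := fun α => if act ψ v⁻¹ α ∈ Pos then act ψ v⁻¹ α else -(act ψ v⁻¹ α))
    (fun α hα => hmem v α hα) (fun α hα => hmem v⁻¹ α hα) ?_ ?_ ?_
  · intro α hα
    by_cases h : act ψ v α ∈ Pos
    · simp only [h, if_pos, act_inv_act]
      rw [if_pos hα]
    · simp only [h, if_false, act_neg, act_inv_act]
      rw [if_neg (hdisj α hα), neg_neg]
  · intro α hα
    by_cases h : act ψ v⁻¹ α ∈ Pos
    · simp only [h, if_pos, act_act_inv]
      rw [if_pos hα]
    · simp only [h, if_false, act_neg, act_act_inv]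
      rw [if_neg (hdisj α hα), neg_neg]
  · intro α hα
    by_cases h : act ψ v α ∈ Pos
    · simp [h]
    · simp [h, abs_neg]

theorem sigma_straight_length_eq_newton_pairing
    (X : Type) [AddCommGroup X] (W₀ : Type) [Group W₀] [Finite W₀]
    -- the (additive) action of `W₀` on the translation lattice `X`
    (ψ : W₀ →* Multiplicative (AddAut X))
    -- the same action, multiplicatively, defining `W̃ = X ⋊ W₀`
    (φ : W₀ →* MulAut (Multiplicative X))
    (hψφ : ∀ (u : W₀) (x : X),
      φ u (Multiplicative.ofAdd x) = Multiplicative.ofAdd (Multiplicative.toAdd (ψ u) x))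
    -- the positive roots, as linear characters on the cocharacter lattice
    (Pos : Finset (X →+ ℤ))
    -- `W₀` permutes the roots `Pos ∪ (−Pos)` …
    (hperm : ∀ (u : W₀), ∀ α ∈ Pos,
      act ψ u α ∈ Pos ∨ ∃ β ∈ Pos, act ψ u α = -β)
    -- … and `Pos ∩ (−Pos) = ∅`
    (hdisj : ∀ α ∈ Pos, -α ∉ Pos)
    -- the length function of `W̃`, pinned down by the standard length formula
    (ℓ : (Multiplicative X ⋊[φ] W₀) → ℕ)
    (hlen : ∀ (lam : X) (u : W₀),
      (ℓ (inl (Multiplicative.ofAdd lam) * inr u) : ℤ) =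
        ∑ α ∈ Pos,
          if act ψ u⁻¹ α ∈ Pos then |α lam| else |α lam - 1|)
    -- a length-preserving automorphism `σ` of finite order
    (σ : MulAut (Multiplicative X ⋊[φ] W₀))
    (hσfin : ∃ k, 0 < k ∧ σ ^ k = 1)
    (hσℓ : ∀ x, ℓ (σ x) = ℓ x)
    -- a `σ`-straight element `w`
    (w : Multiplicative X ⋊[φ] W₀)
    (hstraight : ∀ m : ℕ, 1 ≤ m → ℓ (twistedProd σ w m) = m * ℓ w)
    -- the Newton point: `σⁿ = 1`, `w σ(w) ⋯ σ^{n-1}(w) = t^λ`, and `u·λ` is dominant,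
    -- so that `ν(w) = (1/n)·(u·λ)`
    (n : ℕ) (hn : 0 < n) (hσn : σ ^ n = 1)
    (lam : X)
    (hprod : twistedProd σ w n = inl (Multiplicative.ofAdd lam))
    (u : W₀) (hdom : ∀ α ∈ Pos, 0 ≤ α (Multiplicative.toAdd (ψ u) lam)) :
    -- `ℓ(w) = ⟨ν(w), 2ρ⟩`, with denominators cleared
    (n : ℤ) * (ℓ w : ℤ) = ∑ α ∈ Pos, α (Multiplicative.toAdd (ψ u) lam) := by
  have key : ℓ (inl (Multiplicative.ofAdd lam)) = n * ℓ w := by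
    have h := hstraight n hn
    rwa [hprod] at h
  have h1 : (ℓ (inl (Multiplicative.ofAdd lam)) : ℤ) = ∑ α ∈ Pos, |α lam| := by
    have h := hlen lam 1
    rw [map_one, mul_one] at h
    rw [h]
    refine Finset.sum_congr rfl fun α hα => ?_
    rw [if_pos]
    rwa [inv_one, act_one]
  have h2 : ∑ α ∈ Pos, α (Multiplicative.toAdd (ψ u) lam) = ∑ α ∈ Pos, |α lam| := by
    calc ∑ α ∈ Pos, α (Multiplicative.toAdd (ψ u) lam) = ∑ α ∈ Pos, |(act ψ u⁻¹ α) lam| := by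
          refine Finset.sum_congr rfl fun α hα => ?_
          rw [act_apply, inv_inv, abs_of_nonneg (hdom α hα)]
      _ = ∑ α ∈ Pos, |α lam| := sum_abs_act ψ Pos hperm hdisj u⁻¹ lam
  rw [h2, ← h1, key]
  push_cast
  ring

end Statement4
end

section
/- Let X be a quasi-compact separated scheme. Then X is quasi-affine if and only if the structure sheaf O_X is an ample line bundle on X. -/
/-!
Statement 7: Let `X` be a quasi-compact separated scheme.  Then `X` is quasi-affine
if and only if the structure sheaf `O_X` is an ample line bundle on `X`.

Here `X` quasi-affine means `X` admits an open immersion into an affine scheme, and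
ampleness of the trivial line bundle `O_X` is expressed through its standard
characterization (for quasi-compact separated schemes): the basic open sets `X_s`,
for global sections `s ∈ Γ(X, O_X) = Γ(X, O_X^{⊗ n})`, form a basis of the topology
of `X`.
-/

namespace Statement7

open AlgebraicGeometry CategoryTheory TopologicalSpace

private lemma aux_isIso_of_comp_mono {C : Type*} [Category C] {A B D : C} (h : A ⟶ B) (m : B ⟶ D)
    [Mono m] [IsIso (h ≫ m)] : IsIso h := by
  refine ⟨m ≫ inv (h ≫ m), by rw [← Category.assoc, IsIso.hom_inv_id], ?_⟩
  rw [← cancel_mono m]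
  simp



theorem quasiAffine_iff_structureSheaf_ample
    (X : Scheme) [CompactSpace X] [X.IsSeparated] :
    (∃ (R : CommRingCat) (f : X ⟶ Spec R), IsOpenImmersion f) ↔
      Opens.IsBasis {U : X.Opens | ∃ s : Γ(X, ⊤), U = X.basicOpen s} := by
  constructor
  · rintro ⟨R, f, hf⟩
    rw [Opens.isBasis_iff_nbhd]
    intro U x hx
    have himg : IsOpen (f.base '' (U : Set X)) := f.isOpenEmbedding.isOpenMap _ U.2
    obtain ⟨V, ⟨r, rfl⟩, hxr, hrU⟩ :=
      Opens.isBasis_iff_nbhd.mp PrimeSpectrum.isBasis_basic_opens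
        (U := ⟨_, himg⟩) (Set.mem_image_of_mem f.base hx)
    have key : f ⁻¹ᵁ PrimeSpectrum.basicOpen r
        = X.basicOpen (f.appTop ((Scheme.ΓSpecIso R).inv r)) := by
      rw [← basicOpen_eq_of_affine, Scheme.preimage_basicOpen, Scheme.Hom.appTop]; rfl
    refine ⟨X.basicOpen (f.appTop ((Scheme.ΓSpecIso R).inv r)), ⟨_, rfl⟩, ?_, ?_⟩
    · rw [← key]; exact hxr
    · intro y hy
      rw [← key] at hy
      obtain ⟨z, hz, hz'⟩ := hrU hy
      exact f.isOpenEmbedding.injective hz' ▸ hz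
  · intro hB
    have hQS : QuasiSeparatedSpace X := (quasiSeparatedSpace_iff_quasiSeparated X).mpr inferInstance
    -- every point has an affine basic open neighborhood
    have key : ∀ x : X, ∃ s : Γ(X, ⊤), x ∈ X.basicOpen s ∧ IsAffineOpen (X.basicOpen s) := by
      intro x
      obtain ⟨U, hU, hxU, -⟩ :=
        Opens.isBasis_iff_nbhd.mp X.isBasis_affineOpens (Opens.mem_top x)
      obtain ⟨V, ⟨s, rfl⟩, hxV, hVU⟩ := Opens.isBasis_iff_nbhd.mp hB hxU
      refine ⟨s, hxV, ?_⟩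
      have heq : X.basicOpen (X.presheaf.map (homOfLE (le_top : U ≤ ⊤)).op s)
          = X.basicOpen s := by
        rw [Scheme.basicOpen_res]
        exact inf_eq_right.mpr hVU
      rw [← heq]
      exact hU.basicOpen _
    choose s hmem haff using key
    obtain ⟨t, ht⟩ := IsCompact.elim_finite_subcover isCompact_univ
      (fun x : X ↦ (X.basicOpen (s x) : Set X))
      (fun x ↦ (X.basicOpen (s x)).2)
      (fun x _ ↦ Set.mem_iUnion.mpr ⟨x, hmem x⟩)
    let D : t → (Spec (Γ(X, ⊤))).Opens := fun i ↦ PrimeSpectrum.basicOpen (s i)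
    let U : (Spec (Γ(X, ⊤))).Opens := ⨆ i, D i
    have hpre : ∀ i : t, X.toSpecΓ ⁻¹ᵁ D i = X.basicOpen (s i) := fun i ↦
      X.toSpecΓ_preimage_basicOpen _
    have hle : Set.range X.toSpecΓ.base ⊆ Set.range U.ι.base := by
      rw [Scheme.Opens.range_ι]
      rintro _ ⟨x, rfl⟩
      obtain ⟨_, ⟨i, rfl⟩, _, ⟨hi, rfl⟩, hxi⟩ := ht (Set.mem_univ x)
      have : x ∈ X.toSpecΓ ⁻¹ᵁ D ⟨i, hi⟩ := by rw [hpre]; exact hxi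
      exact Opens.mem_iSup.mpr ⟨⟨i, hi⟩, this⟩
    let g := IsOpenImmersion.lift U.ι X.toSpecΓ hle
    have hfac : g ≫ U.ι = X.toSpecΓ := IsOpenImmersion.lift_fac U.ι X.toSpecΓ hle
    -- each restriction of toSpecΓ to a basic open of the image is an isomorphism
    have hiso : ∀ i : t, IsIso (X.toSpecΓ ∣_ D i) := by
      intro i
      have : IsAffine (D i).toScheme := by
        show IsAffineOpen (D i)
        show IsAffineOpen (X := Spec (Γ(X, ⊤))) (PrimeSpectrum.basicOpen (s i))
        simp only [← basicOpen_eq_of_affine]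
        exact (isAffineOpen_top (Spec (Γ(X, ⊤)))).basicOpen _
      have h := (@HasAffineProperty.iff_of_isAffine
        (MorphismProperty.isomorphisms Scheme) _
        instHasAffinePropertyIsomorphismsSchemeAndIsAffineIsIsoCommRingCatAppTop _ _
        (X.toSpecΓ ∣_ D i) _).mpr ⟨?_, ?_⟩
      · exact h
      · show IsAffineOpen (X.toSpecΓ ⁻¹ᵁ D i)
        rw [hpre]
        exact haff i
      · simp only [Functor.comp_obj, Functor.rightOp_obj, Scheme.Γ_obj, Scheme.Spec_obj, id_eq,
          eq_mpr_eq_cast, Functor.id_obj, Opens.map_top, morphismRestrict_app]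
        refine IsIso.comp_isIso' ?_ (X.presheaf.mapIso (eqToIso (by simp only [Scheme.Opens.ι_image_top])).op).isIso_hom
        convert isIso_ΓSpec_adjunction_unit_app_basicOpen (X := X) (s i) using 0
        refine congr(IsIso ((ΓSpec.adjunction.unit.app X).app $(?_)))
        exact (D i).ι_image_top
    have hsup : ⨆ i : t, (U.ι ⁻¹ᵁ D i) = ⊤ := by
      rw [eq_top_iff, ← U.ι_preimage_self]
      intro x hx
      obtain ⟨i, hi⟩ := Opens.mem_iSup.mp hx
      exact Opens.mem_iSup.mpr ⟨i, hi⟩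
    have hgi : ∀ i : t, IsOpenImmersion (g ∣_ (U.ι ⁻¹ᵁ D i)) := by
      intro i
      have h2 : IsIso ((g ≫ U.ι) ∣_ D i) := by
        have h := hiso i
        generalize hE : X.toSpecΓ = F at hfac h
        subst hfac
        exact h
      have h1 : IsIso ((g ∣_ (U.ι ⁻¹ᵁ D i)) ≫ (U.ι ∣_ D i)) := by
        rw [← morphismRestrict_comp]
        exact h2
      have := aux_isIso_of_comp_mono (g ∣_ (U.ι ⁻¹ᵁ D i)) (U.ι ∣_ D i)
      infer_instance
    have : IsOpenImmersion g :=
      IsZariskiLocalAtTarget.of_iSup_eq_top (P := @IsOpenImmersion) _ hsup hgi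
    refine ⟨Γ(X, ⊤), X.toSpecΓ, ?_⟩
    rw [← hfac]
    infer_instance

end Statement7
end

section
/- Let W̃ be an extended affine Weyl group, W_K a finite standard parabolic subgroup with Weyl group W_K, and Adm({μ}) ⊆ W̃ the admissible set of a dominant cocharacter μ. Define Adm({μ})^K = W_K·Adm({μ})·W_K and {}^K Adm({μ}) = Adm({μ})^K ∩ {}^K W̃. Then the natural surjection {}^K W̃ → W_K\W̃/W_K restricts to a surjection {}^K Adm({μ}) ↠ Adm({μ})_K := W_K\Adm({μ})^K/W_K, and this surjection admits two sections: w ↦ x_w (the minimal-length element of the double coset) and w ↦ {}^K w_K (the maximal-length element of W_K w W_K ∩ {}^K W̃). Both x_w and {}^K w_K lie in {}^K Adm({μ}), and x_w ≤ {}^K w_K in the Bruhat order. -/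
set_option linter.unusedSectionVars false
set_option maxHeartbeats 1000000


/-!
Statement 12: Let `W̃` be an extended affine Weyl group (`W̃ = W_a ⋊ Ω` with Bruhat order
and length inherited from the Coxeter group `W_a`), `W_K` a finite standard parabolic
subgroup, and `Adm({μ}) ⊆ W̃` the admissible set of a dominant cocharacter `μ`.  Define
`Adm({μ})^K = W_K·Adm({μ})·W_K` and `{}^K Adm({μ}) = Adm({μ})^K ∩ {}^K W̃`.  Then the
natural surjection `{}^K W̃ → W_K\W̃/W_K` restricts to a surjection
`{}^K Adm({μ}) ↠ Adm({μ})_K := W_K\Adm({μ})^K/W_K`, and this surjection admits two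
sections: `w ↦ x_w` (the minimal-length element of the double coset) and
`w ↦ {}^K w_K` (the maximal-length element of `W_K w W_K ∩ {}^K W̃`).  Both `x_w` and
`{}^K w_K` lie in `{}^K Adm({μ})`, and `x_w ≤ {}^K w_K` in the Bruhat order.

Following Haines–He, the identity `{}^K Adm({μ}) = Adm({μ}) ∩ {}^K W̃` is taken as a
hypothesis characterizing the admissible set `Adm`.
-/

namespace Statement12

open CoxeterSystem SemidirectProduct

variable {B : Type*} {Wa : Type*} [Group Wa] {M : CoxeterMatrix B}
variable {Ω : Type*} [Group Ω]

/-- The Bruhat order on a Coxeter group, via the subword property. -/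
def BruhatLE (cs : CoxeterSystem M Wa) (u w : Wa) : Prop :=
  ∃ lw : List B, cs.wordProd lw = w ∧ lw.length = cs.length w ∧
    ∃ lu : List B, lu.Sublist lw ∧ cs.wordProd lu = u

/-- The Bruhat order on the extended group `W̃ = W_a ⋊ Ω`. -/
def ExtBruhatLE (cs : CoxeterSystem M Wa) {φ : Ω →* MulAut Wa}
    (x y : Wa ⋊[φ] Ω) : Prop :=
  x.right = y.right ∧ BruhatLE cs x.left y.left

/-- The length function on `W̃ = W_a ⋊ Ω`. -/
noncomputable def extLength (cs : CoxeterSystem M Wa) {φ : Ω →* MulAut Wa}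
    (x : Wa ⋊[φ] Ω) : ℕ :=
  cs.length x.left

section Machinery


open CoxeterSystem List
open scoped Classical

variable {W : Type*} [Group W]

/-- mod-2 count of occurrences of `t` in a list. -/
noncomputable def cnt (l : List W) (t : W) : ZMod 2 :=
  (l.map fun u => if u = t then (1 : ZMod 2) else 0).sum

theorem cnt_nil (t : W) : cnt ([] : List W) t = 0 := rfl

theorem cnt_cons (a : W) (l : List W) (t : W) :
    cnt (a :: l) t = (if a = t then (1 : ZMod 2) else 0) + cnt l t := by
  simp [cnt]

theorem cnt_append (l₁ l₂ : List W) (t : W) :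
    cnt (l₁ ++ l₂) t = cnt l₁ t + cnt l₂ t := by
  simp [cnt]

theorem cnt_eq_zero_of_not_mem {l : List W} {t : W} (h : t ∉ l) : cnt l t = 0 := by
  induction l with
  | nil => rfl
  | cons a l ih =>
    rw [cnt_cons, if_neg (by rintro rfl; exact h mem_cons_self),
      ih (fun hm => h (mem_cons_of_mem _ hm)), zero_add]

theorem mem_of_cnt_ne_zero {l : List W} {t : W} (h : cnt l t ≠ 0) : t ∈ l := by
  by_contra hm
  exact h (cnt_eq_zero_of_not_mem hm)

variable (cs : CoxeterSystem M W)

local prefix:100 "s" => cs.simple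
local prefix:100 "π" => cs.wordProd
local prefix:100 "ℓ" => cs.length

theorem conj_simple_eq_simple_iff (i : B) (t : W) :
    (s i * t * s i = s i) ↔ t = s i := by
  constructor
  · intro h
    have h2 := congrArg (fun x => s i * x * s i) h
    have h3 : s i * (s i * t * s i) * s i = t := by
      group; simp [cs.simple_sq]
    rw [h3] at h2
    rw [h2, cs.simple_mul_simple_self, one_mul]
  · rintro rfl; rw [cs.simple_mul_simple_self, one_mul]

/-- The toggle permutation of `W × ZMod 2` attached to a simple reflection. -/
noncomputable def toggle (i : B) : Equiv.Perm (W × ZMod 2) :=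
  Function.Involutive.toPerm
    (fun p => (s i * p.1 * s i, p.2 + if p.1 = s i then 1 else 0))
    (by
      intro p
      obtain ⟨t, e⟩ := p
      simp only
      have h1 : s i * (s i * t * s i) * s i = t := by
        group; simp [cs.simple_sq]
      rw [h1]
      have h2 := conj_simple_eq_simple_iff cs i t
      ext
      · rfl
      · simp only [h2]
        by_cases ht : t = s i
        · simp only [if_pos ht, add_assoc]
          norm_num
          decide
        · simp [if_neg ht])

theorem toggle_apply (i : B) (t : W) (e : ZMod 2) :
    toggle cs i (t, e) = (s i * t * s i, e + if t = s i then 1 else 0) := rfl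

/-- Product of toggles along a word. -/
noncomputable def togProd (ω : List B) : Equiv.Perm (W × ZMod 2) :=
  (ω.map (toggle cs)).prod

theorem togProd_nil : togProd cs ([] : List B) = 1 := rfl

theorem togProd_cons (i : B) (ω : List B) :
    togProd cs (i :: ω) = toggle cs i * togProd cs ω := by
  simp [togProd]

theorem togProd_apply (ω : List B) (t : W) (e : ZMod 2) :
    togProd cs ω (t, e) = (π ω * t * (π ω)⁻¹, e + cnt (cs.rightInvSeq ω) t) := by
  induction ω generalizing t e with
  | nil => simp [togProd_nil, cnt_nil]
  | cons i ω ih =>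
    rw [togProd_cons]
    have hseq : cs.rightInvSeq (i :: ω) = ((π ω)⁻¹ * s i * π ω) :: cs.rightInvSeq ω := rfl
    rw [hseq, cnt_cons]
    rw [Equiv.Perm.mul_apply, ih, toggle_apply]
    have hcond : (π ω * t * (π ω)⁻¹ = s i) ↔ t = (π ω)⁻¹ * s i * π ω := by
      constructor
      · intro h; rw [← h]; group
      · intro h; rw [h]; group
    rw [cs.wordProd_cons]
    ext
    · simp only [mul_inv_rev, cs.inv_simple]
      group
    · simp only
      rw [hcond, show ((π ω)⁻¹ * s i * π ω = t) ↔ (t = (π ω)⁻¹ * s i * π ω) from eq_comm]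
      ring


theorem simple_mul_pow (i j : B) (k : ℕ) :
    s j * (s i * s j) ^ k * (s j)⁻¹ = ((s i * s j) ^ k)⁻¹ := by
  have h1 : s j * (s i * s j) * (s j)⁻¹ = (s i * s j)⁻¹ := by
    rw [cs.inv_simple, mul_inv_rev, cs.inv_simple, cs.inv_simple]
    calc s j * (s i * s j) * s j = s j * s i * (s j * s j) := by group
      _ = s j * s i := by rw [cs.simple_mul_simple_self, mul_one]
  calc s j * (s i * s j) ^ k * (s j)⁻¹
      = (s j * (s i * s j) * (s j)⁻¹) ^ k := conj_pow.symm
    _ = ((s i * s j)⁻¹) ^ k := by rw [h1]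
    _ = ((s i * s j) ^ k)⁻¹ := inv_pow _ _

theorem hswap (i j : B) (k : ℕ) :
    s j * (s i * s j) ^ k = ((s i * s j) ^ k)⁻¹ * s j := by
  calc s j * (s i * s j) ^ k
      = (s j * (s i * s j) ^ k * (s j)⁻¹) * s j := by group
    _ = ((s i * s j) ^ k)⁻¹ * s j := by rw [simple_mul_pow cs i j k]

theorem even_conj (i j : B) (q : ℕ) :
    ((s i * s j) ^ q)⁻¹ * s j * (s i * s j) ^ q = s j * (s i * s j) ^ (q + q) := by
  calc ((s i * s j) ^ q)⁻¹ * s j * (s i * s j) ^ q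
      = ((s i * s j) ^ q)⁻¹ * (s j * (s i * s j) ^ q) := by rw [mul_assoc]
    _ = ((s i * s j) ^ q)⁻¹ * (((s i * s j) ^ q)⁻¹ * s j) := by rw [hswap cs i j q]
    _ = ((s i * s j) ^ q * (s i * s j) ^ q)⁻¹ * s j := by rw [mul_inv_rev]; group
    _ = ((s i * s j) ^ (q + q))⁻¹ * s j := by rw [pow_add]
    _ = s j * (s i * s j) ^ (q + q) := (hswap cs i j _).symm

theorem ris_entry_alt (i j : B) (n : ℕ) :
    (π (alternatingWord i j n))⁻¹ * s (if Even n then j else i) * π (alternatingWord i j n)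
      = s j * (s i * s j) ^ n := by
  rw [cs.prod_alternatingWord_eq_mul_pow]
  rcases Nat.even_or_odd n with he | ho
  · obtain ⟨r, rfl⟩ := he
    have hq : (r + r) / 2 = r := by omega
    rw [if_pos ⟨r, rfl⟩, if_pos ⟨r, rfl⟩, hq, one_mul]
    exact even_conj cs i j r
  · obtain ⟨r, rfl⟩ := ho
    have hne : ¬ Even (2 * r + 1) := by simp [Nat.even_add_one, Nat.even_mul]
    have hq : (2 * r + 1) / 2 = r := by omega
    rw [if_neg hne, if_neg hne, hq]
    have h0 : (s j * (s i * s j) ^ r)⁻¹ * s i * (s j * (s i * s j) ^ r)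
        = ((s i * s j) ^ r)⁻¹ * (s j * (s i * s j)) * (s i * s j) ^ r := by
      rw [mul_inv_rev, cs.inv_simple]; group
    rw [h0]
    have h2 : (s i * s j) * (s i * s j) ^ r = (s i * s j) ^ r * (s i * s j) := by
      rw [← pow_succ', pow_succ]
    calc ((s i * s j) ^ r)⁻¹ * (s j * (s i * s j)) * (s i * s j) ^ r
        = ((s i * s j) ^ r)⁻¹ * s j * ((s i * s j) * (s i * s j) ^ r) := by
          simp only [mul_assoc]
      _ = ((s i * s j) ^ r)⁻¹ * s j * ((s i * s j) ^ r * (s i * s j)) := by rw [h2]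
      _ = (((s i * s j) ^ r)⁻¹ * s j * (s i * s j) ^ r) * (s i * s j) := by
          simp only [mul_assoc]
      _ = (s j * (s i * s j) ^ (r + r)) * (s i * s j) := by rw [even_conj cs i j r]
      _ = s j * ((s i * s j) ^ (r + r) * (s i * s j)) := by rw [mul_assoc]
      _ = s j * (s i * s j) ^ (2 * r + 1) := by
          rw [← pow_succ, show r + r + 1 = 2 * r + 1 by omega]

theorem ris_alt (i j : B) (n : ℕ) :
    cs.rightInvSeq (alternatingWord i j n)
      = ((List.range n).reverse).map (fun k => s j * (s i * s j) ^ k) := by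
  induction n with
  | zero => simp [alternatingWord]
  | succ n ih =>
    rw [CoxeterSystem.alternatingWord_succ' i j n]
    have hcons : cs.rightInvSeq ((if Even n then j else i) :: alternatingWord i j n)
        = ((π (alternatingWord i j n))⁻¹ * s (if Even n then j else i)
            * π (alternatingWord i j n)) :: cs.rightInvSeq (alternatingWord i j n) := rfl
    rw [hcons, ris_entry_alt cs i j n, ih]
    rw [show List.range (n+1) = List.range n ++ [n] by simpa using List.range_succ (n := n)]
    rw [List.reverse_append]
    rfl

theorem cnt_ris_alt (i j : B) (m : ℕ) (hm : (s i * s j) ^ m = 1) (t : W) :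
    cnt (cs.rightInvSeq (alternatingWord i j (2 * m))) t = 0 := by
  rw [ris_alt]
  rw [show 2 * m = m + m by ring, List.range_add, List.reverse_append, List.map_append, cnt_append]
  have heq : (((List.range m).map (m + ·)).reverse).map (fun k => s j * (s i * s j) ^ k)
       = ((List.range m).reverse).map (fun k => s j * (s i * s j) ^ k) := by
    rw [← List.map_reverse, List.map_map]
    apply List.map_congr_left
    intro k _
    simp only [Function.comp_apply]
    rw [pow_add, hm, one_mul]
  rw [heq]
  exact CharTwo.add_self_eq_zero _

theorem alt_two_succ (i j : B) (m : ℕ) :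
    alternatingWord i j (2 * (m + 1)) = i :: j :: alternatingWord i j (2 * m) := by
  rw [show 2 * (m + 1) = (2 * m + 1) + 1 by ring]
  rw [CoxeterSystem.alternatingWord_succ' i j (2 * m + 1),
    CoxeterSystem.alternatingWord_succ' i j (2 * m)]
  have h1 : ¬ Even (2 * m + 1) := by simp [Nat.even_add_one, Nat.even_mul]
  have h2 : Even (2 * m) := ⟨m, by ring⟩
  rw [if_neg h1, if_pos h2]

theorem tog_alt_pow (i j : B) (m : ℕ) :
    togProd cs (alternatingWord i j (2 * m)) = (toggle cs i * toggle cs j) ^ m := by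
  induction m with
  | zero => simp [alternatingWord, togProd_nil]
  | succ m ih =>
    rw [alt_two_succ, togProd_cons, togProd_cons, ih, pow_succ']
    rw [mul_assoc]

theorem toggle_braid (i j : B) : (toggle cs i * toggle cs j) ^ M i j = 1 := by
  rw [← tog_alt_pow]
  apply Equiv.ext
  rintro ⟨t, e⟩
  rw [togProd_apply]
  have h1 : π (alternatingWord i j (2 * M i j)) = 1 := by
    rw [cs.prod_alternatingWord_eq_mul_pow, if_pos ⟨M i j, by ring⟩, one_mul,
      show 2 * M i j / 2 = M i j by omega, cs.simple_mul_simple_pow]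
  rw [h1, cnt_ris_alt cs i j (M i j) (cs.simple_mul_simple_pow i j) t]
  simp

/-- The reflection-sign homomorphism. -/
noncomputable def psi : W →* Equiv.Perm (W × ZMod 2) :=
  cs.lift ⟨fun i => toggle cs i, fun i j => toggle_braid cs i j⟩

theorem psi_simple (i : B) : psi cs (s i) = toggle cs i :=
  cs.lift_apply_simple _ i

theorem psi_wordProd (ω : List B) : psi cs (π ω) = togProd cs ω := by
  induction ω with
  | nil => rw [cs.wordProd_nil, map_one, togProd_nil]
  | cons i ω ih => rw [cs.wordProd_cons, map_mul, psi_simple, ih, togProd_cons]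

theorem cnt_ris_invariant {ω ω' : List B} (h : π ω = π ω') (t : W) :
    cnt (cs.rightInvSeq ω) t = cnt (cs.rightInvSeq ω') t := by
  have h1 := togProd_apply cs ω t 0
  have h2 := togProd_apply cs ω' t 0
  rw [← psi_wordProd] at h1 h2
  rw [h] at h1
  have := h1.symm.trans h2
  have := congrArg Prod.snd this
  simpa using this

theorem cnt_ris_mul_simple {w : W} {i : B} (hlt : ℓ (w * s i) < ℓ w)
    {ω : List B} (hw : π ω = w) : cnt (cs.rightInvSeq ω) (s i) = 1 := by
  obtain ⟨τ, hτred, hτ⟩ := cs.exists_reduced_word' (w * s i)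
  have hπconcat : π (τ.concat i) = w := by
    rw [List.concat_eq_append, cs.wordProd_append, ← hτ]
    simp [cs.wordProd_cons, cs.simple_mul_simple_cancel_right]
  rw [cnt_ris_invariant cs (hw.trans hπconcat.symm) (s i)]
  rw [cs.rightInvSeq_concat, List.concat_eq_append, cnt_append]
  have hnotmem : s i ∉ cs.rightInvSeq τ := by
    intro hmem
    obtain ⟨k, hk, hval⟩ := List.mem_iff_getElem.mp hmem
    have hk' : k < τ.length := by
      have := cs.length_rightInvSeq τ; omega
    have hgd : (cs.rightInvSeq τ).getD k 1 = s i := by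
      rw [List.getD_eq_getElem _ 1 hk, hval]
    have herase := cs.wordProd_mul_getD_rightInvSeq τ k
    rw [hgd, ← hτ] at herase
    have hw2 : w = π (τ.eraseIdx k) := by
      rw [← herase, mul_assoc, cs.simple_mul_simple_self, mul_one]
    have hlen : ℓ w ≤ (τ.eraseIdx k).length := hw2 ▸ cs.length_wordProd_le _
    have hlen2 : (τ.eraseIdx k).length + 1 = τ.length := List.length_eraseIdx_add_one hk'
    have hτlen : τ.length = ℓ (w * s i) := by rw [hτ]; exact hτred.symm
    omega
  have hmap : cnt (List.map (⇑(MulAut.conj (s i))) (cs.rightInvSeq τ)) (s i) = 0 := by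
    apply cnt_eq_zero_of_not_mem
    intro hmem
    obtain ⟨u, hu, huv⟩ := List.mem_map.mp hmem
    apply hnotmem
    have h3 : s i * u * s i = s i := by
      have h4 := huv
      rwa [MulAut.conj_apply, cs.inv_simple] at h4
    have h5 : u = s i := (conj_simple_eq_simple_iff cs i u).mp h3
    rwa [h5] at hu
  rw [hmap, zero_add, cnt_cons, if_pos rfl, cnt_nil, add_zero]


theorem right_exchange' {w : W} {i : B} (hlt : ℓ (w * s i) < ℓ w)
    {ω : List B} (hred : cs.IsReduced ω) (hw : π ω = w) :
    ∃ ω', ω'.Sublist ω ∧ ω'.length + 1 = ω.length ∧ π ω' = w * s i := by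
  have hc : cnt (cs.rightInvSeq ω) (s i) = 1 := cnt_ris_mul_simple cs hlt hw
  have hmem : s i ∈ cs.rightInvSeq ω := mem_of_cnt_ne_zero (by rw [hc]; decide)
  obtain ⟨k, hk, hval⟩ := List.mem_iff_getElem.mp hmem
  have hk' : k < ω.length := by have := cs.length_rightInvSeq ω; omega
  have hgd : (cs.rightInvSeq ω).getD k 1 = s i := by rw [List.getD_eq_getElem _ 1 hk, hval]
  have herase := cs.wordProd_mul_getD_rightInvSeq ω k
  rw [hgd, hw] at herase
  exact ⟨ω.eraseIdx k, List.eraseIdx_sublist ω k, List.length_eraseIdx_add_one hk', herase.symm⟩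

theorem left_exchange' {w : W} {i : B} (hlt : ℓ (s i * w) < ℓ w)
    {ω : List B} (hred : cs.IsReduced ω) (hw : π ω = w) :
    ∃ ω', ω'.Sublist ω ∧ ω'.length + 1 = ω.length ∧ π ω' = s i * w := by
  have h1 : ℓ (w⁻¹ * s i) < ℓ w⁻¹ := by
    calc ℓ (w⁻¹ * s i) = ℓ ((s i * w)⁻¹) := by rw [mul_inv_rev, cs.inv_simple]
      _ = ℓ (s i * w) := cs.length_inv _
      _ < ℓ w := hlt
      _ = ℓ w⁻¹ := (cs.length_inv w).symm
  have hred' : cs.IsReduced ω.reverse := (cs.isReduced_reverse_iff ω).mpr hred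
  have hw' : π ω.reverse = w⁻¹ := by rw [cs.wordProd_reverse, hw]
  obtain ⟨σ, hsub, hlen, hπ⟩ := right_exchange' cs h1 hred' hw'
  refine ⟨σ.reverse, by simpa using hsub.reverse, by simpa using hlen, ?_⟩
  rw [cs.wordProd_reverse, hπ, mul_inv_rev, inv_inv, cs.inv_simple]

section Parabolic

variable (K : Set B)

theorem wordProd_mem_closure {ω : List B} (hω : ∀ b ∈ ω, b ∈ K) :
    π ω ∈ Subgroup.closure (cs.simple '' K) := by
  induction ω with
  | nil => rw [cs.wordProd_nil]; exact one_mem _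
  | cons b ρ ih =>
    rw [cs.wordProd_cons]
    exact mul_mem (Subgroup.subset_closure ⟨b, hω b List.mem_cons_self, rfl⟩)
      (ih fun c hc => hω c (List.mem_cons_of_mem b hc))

theorem K_word_reduce : ∀ n (ω : List B), ω.length = n → (∀ b ∈ ω, b ∈ K) →
    ∃ ω', (∀ b ∈ ω', b ∈ K) ∧ cs.IsReduced ω' ∧ π ω' = π ω := by
  intro n
  induction n using Nat.strong_induction_on with
  | _ n ih =>
    intro ω hlen hK
    match ω, hlen with
    | [], _ => exact ⟨[], by simp, by simp [CoxeterSystem.IsReduced], rfl⟩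
    | b :: ρ, hlen =>
      by_cases hρ : cs.IsReduced ρ
      · by_cases hbρ : cs.IsReduced (b :: ρ)
        · exact ⟨b :: ρ, hK, hbρ, rfl⟩
        · have hlt : ℓ (s b * π ρ) < ℓ (π ρ) := by
            rcases cs.length_simple_mul (π ρ) b with h | h
            · exfalso
              apply hbρ
              unfold CoxeterSystem.IsReduced
              rw [cs.wordProd_cons, h, hρ]
              simp
            · rw [hρ] at h ⊢
              omega
          obtain ⟨σ, hsub, hlen', hπ⟩ := left_exchange' cs hlt hρ rfl
          have hKσ : ∀ c ∈ σ, c ∈ K := fun c hc =>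
            hK c (List.mem_cons_of_mem _ (hsub.subset hc))
          obtain ⟨ω', h1, h2, h3⟩ := ih σ.length (by simp at hlen ⊢; omega) σ rfl hKσ
          exact ⟨ω', h1, h2, by rw [h3, hπ, ← cs.wordProd_cons]⟩
      · have hρK : ∀ c ∈ ρ, c ∈ K := fun c hc => hK c (List.mem_cons_of_mem b hc)
        obtain ⟨ρ', h1, h2, h3⟩ := ih ρ.length (by simp at hlen ⊢; omega) ρ rfl hρK
        have hshort : ρ'.length < ρ.length := by
          have hle : ℓ (π ρ) ≤ ρ.length := cs.length_wordProd_le ρ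
          have hne : ℓ (π ρ) ≠ ρ.length := hρ
          have : ρ'.length = ℓ (π ρ) := by rw [← h2, h3]
          omega
        have hKb : ∀ c ∈ b :: ρ', c ∈ K := by
          intro c hc
          rcases List.mem_cons.mp hc with rfl | hc'
          · exact hK c List.mem_cons_self
          · exact h1 c hc'
        obtain ⟨ω', g1, g2, g3⟩ := ih (b :: ρ').length (by simp at hlen ⊢; omega) (b :: ρ') rfl hKb
        refine ⟨ω', g1, g2, ?_⟩
        rw [g3, cs.wordProd_cons, h3, ← cs.wordProd_cons]

theorem exists_K_reduced_word {u : W} (hu : u ∈ Subgroup.closure (cs.simple '' K)) :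
    ∃ ω, (∀ b ∈ ω, b ∈ K) ∧ cs.IsReduced ω ∧ π ω = u := by
  have hex : ∃ ω, (∀ b ∈ ω, b ∈ K) ∧ π ω = u := by
    induction hu using Subgroup.closure_induction with
    | mem x hx =>
      obtain ⟨b, hb, rfl⟩ := hx
      exact ⟨[b], by simpa using hb, by rw [cs.wordProd_cons, cs.wordProd_nil, mul_one]⟩
    | one => exact ⟨[], by simp, cs.wordProd_nil⟩
    | mul x y hx hy ihx ihy =>
      obtain ⟨a, ha1, ha2⟩ := ihx
      obtain ⟨c, hc1, hc2⟩ := ihy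
      refine ⟨a ++ c, ?_, by rw [cs.wordProd_append, ha2, hc2]⟩
      intro d hd
      rcases List.mem_append.mp hd with h | h
      · exact ha1 d h
      · exact hc1 d h
    | inv x hx ihx =>
      obtain ⟨a, ha1, ha2⟩ := ihx
      exact ⟨a.reverse, fun d hd => ha1 d (List.mem_reverse.mp hd),
        by rw [cs.wordProd_reverse, ha2]⟩
  obtain ⟨ω, hω1, hω2⟩ := hex
  obtain ⟨ω', h1, h2, h3⟩ := K_word_reduce cs K ω.length ω rfl hω1
  exact ⟨ω', h1, h2, by rw [h3, hω2]⟩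

theorem exists_simple_descent_left {u : W} (hu : u ∈ Subgroup.closure (cs.simple '' K))
    (hne : u ≠ 1) : ∃ b ∈ K, ∃ u' ∈ Subgroup.closure (cs.simple '' K),
      u = s b * u' ∧ ℓ u' + 1 = ℓ u := by
  obtain ⟨ω, hω1, hω2, hω3⟩ := exists_K_reduced_word cs K hu
  match ω, hω1, hω2, hω3 with
  | [], _, _, hω3 => exact absurd (by rw [← hω3, cs.wordProd_nil]) hne
  | b :: ρ, hω1, hω2, hω3 =>
    have hρred : cs.IsReduced ρ := by
      have := CoxeterSystem.IsReduced.drop (ω := b :: ρ) hω2 1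
      simpa using this
    refine ⟨b, hω1 b List.mem_cons_self, π ρ,
      wordProd_mem_closure cs K (fun c hc => hω1 c (List.mem_cons_of_mem b hc)), ?_, ?_⟩
    · rw [← hω3, cs.wordProd_cons]
    · rw [hρred, ← hω3, hω2]
      simp

theorem exists_simple_descent_right {u : W} (hu : u ∈ Subgroup.closure (cs.simple '' K))
    (hne : u ≠ 1) : ∃ b ∈ K, ∃ u' ∈ Subgroup.closure (cs.simple '' K),
      u = u' * s b ∧ ℓ u' + 1 = ℓ u := by
  obtain ⟨b, hb, y, hy, hyeq, hylen⟩ :=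
    exists_simple_descent_left cs K (inv_mem hu) (by simpa using hne)
  refine ⟨b, hb, y⁻¹, inv_mem hy, ?_, ?_⟩
  · have := congrArg (·⁻¹) hyeq
    simp only [mul_inv_rev, inv_inv, cs.inv_simple] at this
    exact this
  · rw [cs.length_inv, ← cs.length_inv u]
    exact hylen

end Parabolic

section DoubleCoset

variable (K K' : Set B)

theorem right_coset_additive {m : W}
    (hminq : ∀ q ∈ Subgroup.closure (cs.simple '' K'), ℓ m ≤ ℓ (m * q)) :
    ∀ v ∈ Subgroup.closure (cs.simple '' K'), ℓ (m * v) = ℓ m + ℓ v := by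
  suffices H : ∀ n, ∀ v ∈ Subgroup.closure (cs.simple '' K'), ℓ v = n →
      ℓ (m * v) = ℓ m + ℓ v by
    exact fun v hv => H (ℓ v) v hv rfl
  intro n
  induction n using Nat.strong_induction_on with
  | _ n ih =>
    intro v hv hlv
    by_cases h0 : v = 1
    · subst h0; simp
    obtain ⟨b, hbK, v', hv', rfl, hlen⟩ := exists_simple_descent_right cs K' hv h0
    have ihv' : ℓ (m * v') = ℓ m + ℓ v' := ih (ℓ v') (by omega) v' hv' rfl
    rcases cs.length_mul_simple (m * v') b with h | h
    · rw [← mul_assoc, h, ihv']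
      omega
    · exfalso
      -- build a reduced word for m * v'
      obtain ⟨μ, hμred, hμ⟩ := cs.exists_reduced_word' m
      obtain ⟨ν, hν1, hν2, hν3⟩ := exists_K_reduced_word cs K' hv'
      have hπ : π (μ ++ ν) = m * v' := by rw [cs.wordProd_append, ← hμ, hν3]
      have hredμν : cs.IsReduced (μ ++ ν) := by
        unfold CoxeterSystem.IsReduced
        rw [hπ, List.length_append, ihv', ← hμred, ← hν2, hμ, hν3]
      have hlt : ℓ ((m * v') * s b) < ℓ (m * v') := by omega
      obtain ⟨σ, hsub, hlen', hπσ⟩ := right_exchange' cs hlt hredμν hπ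
      rw [List.sublist_append_iff] at hsub
      obtain ⟨σ₁, σ₂, rfl, hs1, hs2⟩ := hsub
      have hl1 : σ₁.length ≤ μ.length := hs1.length_le
      have hl2 : σ₂.length ≤ ν.length := hs2.length_le
      rw [List.length_append] at hlen'
      rw [List.length_append] at hlen'
      rcases Nat.lt_or_ge σ₂.length ν.length with hcase | hcase
      · -- σ₁ = μ, σ₂ shorter than ν : π σ₂ = v' * s b is too short
        have hσ₁ : σ₁ = μ := hs1.eq_of_length (by omega)
        rw [hσ₁, cs.wordProd_append, ← hμ, mul_assoc] at hπσ
        have hπσ₂ : π σ₂ = v' * s b := mul_left_cancel hπσ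
        have hshort : ℓ (v' * s b) ≤ σ₂.length := hπσ₂ ▸ cs.length_wordProd_le σ₂
        have hν2' : ν.length = ℓ v' := by rw [← hν2, hν3]
        omega
      · -- σ₂ = ν, σ₁ shorter : contradiction with minimality of m
        have hσ₂ : σ₂ = ν := hs2.eq_of_length (le_antisymm hl2 hcase)
        rw [hσ₂, cs.wordProd_append, hν3] at hπσ
        have hπσ₁ : π σ₁ = m * (v' * s b * v'⁻¹) := by
          calc π σ₁ = π σ₁ * v' * v'⁻¹ := by group
            _ = m * v' * s b * v'⁻¹ := by rw [hπσ]
            _ = m * (v' * s b * v'⁻¹) := by simp only [mul_assoc]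
        have hq : v' * s b * v'⁻¹ ∈ Subgroup.closure (cs.simple '' K') :=
          mul_mem (mul_mem hv' (Subgroup.subset_closure ⟨b, hbK, rfl⟩)) (inv_mem hv')
        have hge : ℓ m ≤ ℓ (π σ₁) := by
          rw [hπσ₁]; exact hminq _ hq
        have hle' : ℓ (π σ₁) ≤ σ₁.length := cs.length_wordProd_le σ₁
        have hμ' : μ.length = ℓ m := by rw [hμ]; exact hμred.symm
        omega

theorem left_coset_additive {m : W}
    (hminp : ∀ p ∈ Subgroup.closure (cs.simple '' K), ℓ m ≤ ℓ (p * m)) :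
    ∀ u ∈ Subgroup.closure (cs.simple '' K), ℓ (u * m) = ℓ u + ℓ m := by
  intro u hu
  have h1 : ∀ q ∈ Subgroup.closure (cs.simple '' K), ℓ m⁻¹ ≤ ℓ (m⁻¹ * q) := by
    intro q hq
    calc ℓ m⁻¹ = ℓ m := cs.length_inv m
      _ ≤ ℓ (q⁻¹ * m) := hminp q⁻¹ (inv_mem hq)
      _ = ℓ ((q⁻¹ * m)⁻¹) := (cs.length_inv _).symm
      _ = ℓ (m⁻¹ * q) := by rw [mul_inv_rev, inv_inv]
  have h2 := right_coset_additive cs K h1 u⁻¹ (inv_mem hu)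
  calc ℓ (u * m) = ℓ ((u * m)⁻¹) := (cs.length_inv _).symm
    _ = ℓ (m⁻¹ * u⁻¹) := by rw [mul_inv_rev]
    _ = ℓ m⁻¹ + ℓ u⁻¹ := h2
    _ = ℓ u + ℓ m := by rw [cs.length_inv, cs.length_inv]; omega

theorem double_coset_additive {m : W}
    (hmin : ∀ p ∈ Subgroup.closure (cs.simple '' K), ∀ q ∈ Subgroup.closure (cs.simple '' K'),
      ℓ m ≤ ℓ (p * m * q)) :
    ∀ u ∈ Subgroup.closure (cs.simple '' K), ∀ v ∈ Subgroup.closure (cs.simple '' K'),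
      ∃ u₁ ∈ Subgroup.closure (cs.simple '' K), ∃ v₁ ∈ Subgroup.closure (cs.simple '' K'),
        u * m * v = u₁ * m * v₁ ∧ ℓ (u * m * v) = ℓ u₁ + ℓ m + ℓ v₁ := by
  suffices H : ∀ n, ∀ u ∈ Subgroup.closure (cs.simple '' K), ℓ u = n →
      ∀ v ∈ Subgroup.closure (cs.simple '' K'),
      ∃ u₁ ∈ Subgroup.closure (cs.simple '' K), ∃ v₁ ∈ Subgroup.closure (cs.simple '' K'),
        u * m * v = u₁ * m * v₁ ∧ ℓ (u * m * v) = ℓ u₁ + ℓ m + ℓ v₁ by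
    exact fun u hu v hv => H (ℓ u) u hu rfl v hv
  intro n
  induction n using Nat.strong_induction_on with
  | _ n ih =>
    intro u hu hlu v hv
    by_cases h0 : u = 1
    · subst h0
      refine ⟨1, one_mem _, v, hv, rfl, ?_⟩
      have hq : ∀ q ∈ Subgroup.closure (cs.simple '' K'), ℓ m ≤ ℓ (m * q) := by
        intro q hq'
        simpa using hmin 1 (one_mem _) q hq'
      have h3 := right_coset_additive cs K' hq v hv
      simp only [one_mul, h3, cs.length_one]
      omega
    obtain ⟨b, hbK, u', hu', hueq, hulen⟩ := exists_simple_descent_left cs K hu h0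
    obtain ⟨u₁, hu₁, v₁, hv₁, heq, hadd⟩ := ih (ℓ u') (by omega) u' hu' rfl v hv
    have hx : u * m * v = s b * (u' * m * v) := by
      rw [hueq]; simp only [mul_assoc]
    rcases cs.length_simple_mul (u' * m * v) b with hup | hdown
    · refine ⟨s b * u₁, mul_mem (Subgroup.subset_closure ⟨b, hbK, rfl⟩) hu₁, v₁, hv₁, ?_, ?_⟩
      · calc u * m * v = s b * (u' * m * v) := hx
          _ = s b * (u₁ * m * v₁) := by rw [heq]
          _ = (s b * u₁) * m * v₁ := by simp only [mul_assoc]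
      · have e1 : ℓ (u * m * v) = ℓ u₁ + ℓ m + ℓ v₁ + 1 := by
          rw [hx, hup, hadd]
        have hxx : u * m * v = (s b * u₁) * m * v₁ := by
          calc u * m * v = s b * (u' * m * v) := hx
            _ = s b * (u₁ * m * v₁) := by rw [heq]
            _ = (s b * u₁) * m * v₁ := by simp only [mul_assoc]
        have e2 : ℓ (u * m * v) ≤ ℓ (s b * u₁) + ℓ m + ℓ v₁ := by
          rw [hxx]
          calc ℓ ((s b * u₁) * m * v₁) ≤ ℓ ((s b * u₁) * m) + ℓ v₁ := cs.length_mul_le _ _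
            _ ≤ ℓ (s b * u₁) + ℓ m + ℓ v₁ := by
                have := cs.length_mul_le (s b * u₁) m; omega
        have e3 : ℓ (s b * u₁) ≤ ℓ u₁ + 1 := by
          have := cs.length_mul_le (s b) u₁
          rw [cs.length_simple] at this
          omega
        omega
    · -- descent case: exchange
      obtain ⟨α, hα1, hα2, hα3⟩ := exists_K_reduced_word cs K hu₁
      obtain ⟨μ, hμred, hμ⟩ := cs.exists_reduced_word' m
      obtain ⟨β, hβ1, hβ2, hβ3⟩ := exists_K_reduced_word cs K' hv₁
      have hαl : α.length = ℓ u₁ := by rw [← hα2, hα3]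
      have hμl : μ.length = ℓ m := by rw [hμ]; exact hμred.symm
      have hβl : β.length = ℓ v₁ := by rw [← hβ2, hβ3]
      have hπ : π (α ++ (μ ++ β)) = u' * m * v := by
        rw [cs.wordProd_append, cs.wordProd_append, hα3, ← hμ, hβ3, ← mul_assoc, ← heq]
      have hredword : cs.IsReduced (α ++ (μ ++ β)) := by
        unfold CoxeterSystem.IsReduced
        rw [hπ, List.length_append, List.length_append, hαl, hμl, hβl, hadd]
        omega
      have hlt : ℓ (s b * (u' * m * v)) < ℓ (u' * m * v) := by omega
      obtain ⟨σ, hsub, hlen', hπσ⟩ := left_exchange' cs hlt hredword hπ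
      rw [List.sublist_append_iff] at hsub
      obtain ⟨σ₁, σ', rfl, hs1, hs'⟩ := hsub
      rw [List.sublist_append_iff] at hs'
      obtain ⟨σ₂, σ₃, rfl, hs2, hs3⟩ := hs'
      simp only [List.length_append] at hlen'
      have hl1 : σ₁.length ≤ α.length := hs1.length_le
      have hl2 : σ₂.length ≤ μ.length := hs2.length_le
      have hl3 : σ₃.length ≤ β.length := hs3.length_le
      rw [← hx] at hπσ
      have hπσ' : π σ₁ * (π σ₂ * π σ₃) = u * m * v := by
        rw [← cs.wordProd_append, ← cs.wordProd_append]; exact hπσ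
      have hlumv : ℓ (u * m * v) + 1 = ℓ u₁ + ℓ m + ℓ v₁ := by
        rw [hx, ← hadd]; exact hdown
      rcases Nat.lt_or_ge σ₂.length μ.length with hc2 | hc2
      · -- middle short: contradiction with minimality
        exfalso
        have h₁ : σ₁ = α := hs1.eq_of_length (by omega)
        have h₃ : σ₃ = β := hs3.eq_of_length (by omega)
        rw [h₁, h₃, hα3, hβ3] at hπσ'
        have hmid : π σ₂ = (u₁⁻¹ * u) * m * (v * v₁⁻¹) := by
          calc π σ₂ = u₁⁻¹ * (u₁ * (π σ₂ * v₁)) * v₁⁻¹ := by group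
            _ = u₁⁻¹ * (u * m * v) * v₁⁻¹ := by rw [hπσ']
            _ = (u₁⁻¹ * u) * m * (v * v₁⁻¹) := by simp only [mul_assoc]
        have hge : ℓ m ≤ ℓ (π σ₂) := by
          rw [hmid]
          exact hmin _ (mul_mem (inv_mem hu₁) hu) _ (mul_mem hv (inv_mem hv₁))
        have hle' : ℓ (π σ₂) ≤ σ₂.length := cs.length_wordProd_le σ₂
        omega
      · have h₂ : σ₂ = μ := hs2.eq_of_length (le_antisymm hl2 hc2)
        rcases Nat.lt_or_ge σ₁.length α.length with hc1 | hc1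
        · -- left short
          have h₃ : σ₃ = β := hs3.eq_of_length (by omega)
          rw [h₂, h₃, ← hμ, hβ3] at hπσ'
          refine ⟨π σ₁, wordProd_mem_closure cs K (fun c hc => hα1 c (hs1.subset hc)),
            v₁, hv₁, ?_, ?_⟩
          · rw [← hπσ']; simp only [mul_assoc]
          · have e2 : ℓ (u * m * v) ≤ ℓ (π σ₁) + ℓ m + ℓ v₁ := by
              rw [← hπσ']
              calc ℓ (π σ₁ * (m * v₁)) ≤ ℓ (π σ₁) + ℓ (m * v₁) := cs.length_mul_le _ _
                _ ≤ ℓ (π σ₁) + (ℓ m + ℓ v₁) := by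
                    have := cs.length_mul_le m v₁; omega
                _ = ℓ (π σ₁) + ℓ m + ℓ v₁ := by omega
            have e3 : ℓ (π σ₁) ≤ σ₁.length := cs.length_wordProd_le σ₁
            omega
        · -- right short
          have h₁ : σ₁ = α := hs1.eq_of_length (le_antisymm hl1 hc1)
          rw [h₁, h₂, hα3, ← hμ] at hπσ'
          refine ⟨u₁, hu₁, π σ₃, wordProd_mem_closure cs K' (fun c hc => hβ1 c (hs3.subset hc)),
            ?_, ?_⟩
          · rw [← hπσ']; simp only [mul_assoc]
          · have e2 : ℓ (u * m * v) ≤ ℓ u₁ + ℓ m + ℓ (π σ₃) := by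
              rw [← hπσ']
              calc ℓ (u₁ * (m * π σ₃)) ≤ ℓ u₁ + ℓ (m * π σ₃) := cs.length_mul_le _ _
                _ ≤ ℓ u₁ + (ℓ m + ℓ (π σ₃)) := by
                    have := cs.length_mul_le m (π σ₃); omega
                _ = ℓ u₁ + ℓ m + ℓ (π σ₃) := by omega
            have e3 : ℓ (π σ₃) ≤ σ₃.length := cs.length_wordProd_le σ₃
            omega

end DoubleCoset



theorem bruhat_of_double_coset_min (K K' : Set B) {m : W}
    (hmin : ∀ p ∈ Subgroup.closure (cs.simple '' K), ∀ q ∈ Subgroup.closure (cs.simple '' K'),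
      cs.length m ≤ cs.length (p * m * q))
    {u v : W} (hu : u ∈ Subgroup.closure (cs.simple '' K))
    (hv : v ∈ Subgroup.closure (cs.simple '' K')) :
    BruhatLE cs m (u * m * v) := by
  obtain ⟨u₁, hu₁, v₁, hv₁, heq, hadd⟩ := double_coset_additive cs K K' hmin u hu v hv
  obtain ⟨α, hα2, hα3⟩ := cs.exists_reduced_word' u₁
  obtain ⟨μ, hμ2, hμ3⟩ := cs.exists_reduced_word' m
  obtain ⟨β, hβ2, hβ3⟩ := cs.exists_reduced_word' v₁
  refine ⟨α ++ (μ ++ β), ?_, ?_, μ, ?_, hμ3.symm⟩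
  · rw [cs.wordProd_append, cs.wordProd_append, ← hα3, ← hμ3, ← hβ3, ← mul_assoc, ← heq]
  · have e1 : α.length = cs.length u₁ := by rw [hα3]; exact hα2.symm
    have e2 : μ.length = cs.length m := by rw [hμ3]; exact hμ2.symm
    have e3 : β.length = cs.length v₁ := by rw [hβ3]; exact hβ2.symm
    rw [List.length_append, List.length_append]
    omega
  · exact (List.sublist_append_left μ β).trans (List.sublist_append_right α (μ ++ β))

end Machinery


theorem KAdm_sections
    (cs : CoxeterSystem M Wa) (φ : Ω →* MulAut Wa)
    (hφ : ∀ (a : Ω) (v : Wa), cs.length (φ a v) = cs.length v)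
    (K : Set B) (WK : Subgroup Wa)
    (hWK : WK = Subgroup.closure (cs.simple '' K))
    (hfin : (WK : Set Wa).Finite)
    -- the image of `W_K` in `W̃`
    (WKt : Subgroup (Wa ⋊[φ] Ω)) (hWKt : WKt = WK.map inl)
    -- the admissible set of `{μ}`
    (Adm : Set (Wa ⋊[φ] Ω))
    -- `{}^K W̃`: minimal-length representatives of `W_K \ W̃`
    (minRep : Set (Wa ⋊[φ] Ω))
    (hminRep : minRep =
      {x | ∀ v ∈ WKt, extLength cs x ≤ extLength cs (v * x)})
    -- `Adm^K = W_K · Adm · W_K`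
    (AdmK : Set (Wa ⋊[φ] Ω))
    (hAdmK : AdmK = {y | ∃ u ∈ WKt, ∃ a ∈ Adm, ∃ v ∈ WKt, y = u * a * v})
    -- `{}^K Adm = Adm^K ∩ {}^K W̃`
    (KAdm : Set (Wa ⋊[φ] Ω)) (hKAdm : KAdm = AdmK ∩ minRep)
    -- the theorem of He and Haines–He: `{}^K Adm = Adm ∩ {}^K W̃`
    (hHH : AdmK ∩ minRep = Adm ∩ minRep) :
    -- (1) every double coset of `Adm^K` meets `{}^K Adm`, i.e. the natural map
    -- `{}^K Adm → Adm_K = W_K \ Adm^K / W_K` is surjective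
    (∀ a ∈ AdmK, ∃ y ∈ KAdm, ∃ u ∈ WKt, ∃ v ∈ WKt, a = u * y * v) ∧
    -- (2) the minimal-length element `x_w` of a double coset of `Adm^K` lies in
    -- `{}^K Adm` (first section)
    (∀ a ∈ AdmK, ∀ x,
      ((∃ u ∈ WKt, ∃ v ∈ WKt, x = u * a * v) ∧
        ∀ y, (∃ u ∈ WKt, ∃ v ∈ WKt, y = u * a * v) →
          extLength cs x ≤ extLength cs y) →
      x ∈ KAdm) ∧
    -- (3) the maximal-length element `{}^K w_K` of `W_K w W_K ∩ {}^K W̃` lies in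
    -- `{}^K Adm` (second section)
    (∀ a ∈ AdmK, ∀ m,
      ((∃ u ∈ WKt, ∃ v ∈ WKt, m = u * a * v) ∧ m ∈ minRep ∧
        ∀ y, (∃ u ∈ WKt, ∃ v ∈ WKt, y = u * a * v) → y ∈ minRep →
          extLength cs y ≤ extLength cs m) →
      m ∈ KAdm) ∧
    -- (4) `x_w ≤ {}^K w_K` in the Bruhat order
    (∀ a ∈ AdmK, ∀ x m,
      ((∃ u ∈ WKt, ∃ v ∈ WKt, x = u * a * v) ∧
        ∀ y, (∃ u ∈ WKt, ∃ v ∈ WKt, y = u * a * v) →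
          extLength cs x ≤ extLength cs y) →
      ((∃ u ∈ WKt, ∃ v ∈ WKt, m = u * a * v) ∧ m ∈ minRep ∧
        ∀ y, (∃ u ∈ WKt, ∃ v ∈ WKt, y = u * a * v) → y ∈ minRep →
          extLength cs y ≤ extLength cs m) →
      ExtBruhatLE cs x m) := by
  have hAdmK_closed : ∀ a ∈ AdmK, ∀ y : Wa ⋊[φ] Ω,
      (∃ u ∈ WKt, ∃ v ∈ WKt, y = u * a * v) → y ∈ AdmK := by
    rintro a ha y ⟨u, hu, v, hv, hy⟩
    rw [hAdmK] at ha ⊢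
    obtain ⟨u₀, hu₀, a₀, ha₀, v₀, hv₀, ha'⟩ := ha
    exact ⟨u * u₀, mul_mem hu hu₀, a₀, ha₀, v₀ * v, mul_mem hv₀ hv,
      by rw [hy, ha']; simp only [mul_assoc]⟩
  have hmin_mem : ∀ a ∈ AdmK, ∀ x,
      ((∃ u ∈ WKt, ∃ v ∈ WKt, x = u * a * v) ∧
        ∀ y, (∃ u ∈ WKt, ∃ v ∈ WKt, y = u * a * v) →
          extLength cs x ≤ extLength cs y) →
      x ∈ KAdm := by
    rintro a ha x ⟨⟨u, hu, v, hv, hx⟩, hminx⟩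
    rw [hKAdm]
    refine ⟨hAdmK_closed a ha x ⟨u, hu, v, hv, hx⟩, ?_⟩
    rw [hminRep]
    intro g hg
    exact hminx (g * x) ⟨g * u, mul_mem hg hu, v, hv, by rw [hx]; simp only [mul_assoc]⟩
  refine ⟨?_, hmin_mem, ?_, ?_⟩
  · -- (1) surjectivity
    intro a ha
    have hSne : {n : ℕ | ∃ y, (∃ u ∈ WKt, ∃ v ∈ WKt, y = u * a * v) ∧
        extLength cs y = n}.Nonempty :=
      ⟨extLength cs a, a, ⟨1, one_mem _, 1, one_mem _, by simp⟩, rfl⟩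
    obtain ⟨y₀, hy₀coset, hy₀len⟩ := Nat.sInf_mem hSne
    obtain ⟨u, hu, v, hv, hyeq⟩ := hy₀coset
    refine ⟨y₀, ?_, u⁻¹, inv_mem hu, v⁻¹, inv_mem hv, by rw [hyeq]; group⟩
    refine hmin_mem a ha y₀ ⟨⟨u, hu, v, hv, hyeq⟩, ?_⟩
    intro y hy
    rw [hy₀len]
    exact Nat.sInf_le ⟨y, hy, rfl⟩
  · -- (3) maximal minRep element lies in KAdm
    rintro a ha m ⟨hcos, hmRep, -⟩
    rw [hKAdm]
    exact ⟨hAdmK_closed a ha m hcos, hmRep⟩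
  · -- (4) Bruhat comparison
    rintro a ha x m ⟨hxcos, hminx⟩ ⟨hmcos, hmRep, -⟩
    obtain ⟨ux, hux, vx, hvx, hxeq⟩ := hxcos
    obtain ⟨um, hum, vm, hvm, hmeq⟩ := hmcos
    rw [hWKt] at hux hvx hum hvm
    obtain ⟨px, hpx, rfl⟩ := Subgroup.mem_map.mp hux
    obtain ⟨qx, hqx, rfl⟩ := Subgroup.mem_map.mp hvx
    obtain ⟨pm, hpm, rfl⟩ := Subgroup.mem_map.mp hum
    obtain ⟨qm, hqm, rfl⟩ := Subgroup.mem_map.mp hvm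
    have hleft : ∀ (p q : Wa), ((inl p : Wa ⋊[φ] Ω) * a * inl q).left
        = p * a.left * (φ a.right q) := by
      intro p q
      simp [mul_left, mul_right, mul_assoc]
    have hright : ∀ (p q : Wa), ((inl p : Wa ⋊[φ] Ω) * a * inl q).right = a.right := by
      intro p q
      simp [mul_right]
    constructor
    · rw [hxeq, hmeq, hright, hright]
    -- now the Bruhat order on left components
    have himg : (⇑(φ a.right)) '' (cs.simple '' K)
        = cs.simple '' {b | ∃ k ∈ K, φ a.right (cs.simple k) = cs.simple b} := by
      ext w
      constructor
      · rintro ⟨-, ⟨k, hk, rfl⟩, rfl⟩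
        have h1 : cs.length (φ a.right (cs.simple k)) = 1 := by
          rw [hφ, cs.length_simple]
        obtain ⟨b, hb⟩ := cs.length_eq_one_iff.mp h1
        exact ⟨b, ⟨k, hk, hb⟩, hb.symm⟩
      · rintro ⟨b, ⟨k, hk, hkb⟩, rfl⟩
        exact ⟨cs.simple k, ⟨k, hk, rfl⟩, hkb⟩
    set K' : Set B := {b | ∃ k ∈ K, φ a.right (cs.simple k) = cs.simple b} with hK'
    have hmapQ : WK.map (φ a.right).toMonoidHom = Subgroup.closure (cs.simple '' K') := by
      rw [hWK, MonoidHom.map_closure]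
      exact congrArg Subgroup.closure himg
    have hphi_memQ : ∀ q ∈ WK, φ a.right q ∈ Subgroup.closure (cs.simple '' K') := by
      intro q hq
      rw [← hmapQ]
      exact ⟨q, hq, rfl⟩
    have hQ_mem : ∀ r ∈ Subgroup.closure (cs.simple '' K'), ∃ q ∈ WK, φ a.right q = r := by
      intro r hr
      rw [← hmapQ] at hr
      exact Subgroup.mem_map.mp hr
    have hxleft : x.left = px * a.left * (φ a.right qx) := by rw [hxeq]; exact hleft px qx
    have hmleft : m.left = pm * a.left * (φ a.right qm) := by rw [hmeq]; exact hleft pm qm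
    have hminL : ∀ p ∈ Subgroup.closure (cs.simple '' K),
        ∀ r ∈ Subgroup.closure (cs.simple '' K'),
        cs.length x.left ≤ cs.length (p * x.left * r) := by
      intro p hp r hr
      obtain ⟨q, hq, rfl⟩ := hQ_mem r hr
      have hpWK : p ∈ WK := by rw [hWK]; exact hp
      have hyco : ∃ u ∈ WKt, ∃ v ∈ WKt,
          (inl (p * px) * a * inl (qx * q) : Wa ⋊[φ] Ω) = u * a * v := by
        rw [hWKt]
        exact ⟨inl (p * px), Subgroup.mem_map_of_mem _ (mul_mem hpWK hpx), inl (qx * q),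
          Subgroup.mem_map_of_mem _ (mul_mem hqx hq), rfl⟩
      have h2 := hminx _ hyco
      have h3 : (inl (p * px) * a * inl (qx * q) : Wa ⋊[φ] Ω).left
          = p * x.left * φ a.right q := by
        rw [hleft, hxleft]
        simp only [map_mul, mul_assoc]
      calc cs.length x.left
          ≤ cs.length ((inl (p * px) * a * inl (qx * q) : Wa ⋊[φ] Ω).left) := h2
        _ = cs.length (p * x.left * φ a.right q) := by rw [h3]
    have haL : a.left = px⁻¹ * x.left * (φ a.right qx)⁻¹ := by rw [hxleft]; group
    have hml2 : m.left = (pm * px⁻¹) * x.left * ((φ a.right qx)⁻¹ * (φ a.right qm)) := by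
      rw [hmleft, haL]; simp only [mul_assoc]
    rw [hml2]
    apply bruhat_of_double_coset_min cs K K' hminL
    · rw [← hWK]
      exact mul_mem hpm (inv_mem hpx)
    · exact mul_mem (inv_mem (hphi_memQ qx hqx)) (hphi_memQ qm hqm)


end Statement12
end
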